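/- arXiv:1610.01401 — 3 statements merged into one kernel-verified Lean document; each statement's English description precedes it below -/
import Mathlib

section
/- Let d ≥ 1 be an integer, let g be an ℕ₀-valued random variable with subexponential density on the lattice dℕ, and let k ≥ 1 be a fixed integer. If g₁, …, g_k are independent copies of g, then ℙ(g₁ + … + g_k = n) ~ k·ℙ(g = n) as n → ∞ along multiples of d. -/
/-- A power series with coefficient sequence `g`, non-negative coefficients and radius of
convergence `ρ ∈ (0,∞)`, belongs to the class `𝒮_d`. -/
def SubexpClass (d : ℕ) (g : ℕ → ℝ) (ρ : ℝ) : Prop :=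
  1 ≤ d ∧ 0 < ρ ∧ (∀ n, 0 ≤ g n) ∧
  (∀ n, ¬ d ∣ n → g n = 0) ∧
  (∃ N, ∀ n, N ≤ n → d ∣ n → 0 < g n) ∧
  Summable (fun n => g n * ρ ^ n) ∧
  (∀ r : ℝ, ρ < r → ¬ Summable (fun n => g n * r ^ n)) ∧
  Filter.Tendsto (fun m => g (d * m) / g (d * m + d)) Filter.atTop (nhds (ρ ^ d)) ∧
  Filter.Tendsto
    (fun m => (∑ i ∈ Finset.range (d * m + 1), g i * g (d * m - i)) / g (d * m))
    Filter.atTop (nhds (2 * ∑' n, g n * ρ ^ n))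


open Filter

section Helpers
variable {d : ℕ} {p : ℕ → ℝ} {N₀ : ℕ}

lemma my_pos_lat (hd : 1 ≤ d) (hN₀ : ∀ n, N₀ ≤ n → d ∣ n → 0 < p n) :
    ∀ᶠ m in atTop, 0 < p (d*m) := by
  filter_upwards [eventually_ge_atTop N₀] with m hm
  exact hN₀ _ (le_trans hm (Nat.le_mul_of_pos_left m (by omega))) ⟨m, rfl⟩

lemma my_ratio_fwd (hratio : Tendsto (fun m => p (d*m) / p (d*m+d)) atTop (nhds 1)) :
    Tendsto (fun m => p (d*m+d) / p (d*m)) atTop (nhds 1) := by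
  have h := hratio.inv₀ one_ne_zero
  rw [inv_one] at h
  refine h.congr (fun m => ?_)
  rw [inv_div]

lemma my_ratio_pow (hd : 1 ≤ d) (hN₀ : ∀ n, N₀ ≤ n → d ∣ n → 0 < p n)
    (hratio : Tendsto (fun m => p (d*m) / p (d*m+d)) atTop (nhds 1)) (j : ℕ) :
    Tendsto (fun m => p (d*m + d*j) / p (d*m)) atTop (nhds 1) := by
  induction j with
  | zero =>
    refine Tendsto.congr' ?_ (tendsto_const_nhds (f := atTop (α := ℕ)))
    filter_upwards [my_pos_lat hd hN₀] with m hm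
    simp [div_self hm.ne']
  | succ j ih =>
    have h1 : Tendsto (fun m => p (d*(m+j)+d) / p (d*(m+j))) atTop (nhds 1) :=
      (my_ratio_fwd hratio).comp (tendsto_add_atTop_nat j)
    have h2 := h1.mul ih
    rw [mul_one] at h2
    refine h2.congr' ?_
    filter_upwards [(tendsto_add_atTop_nat j).eventually (my_pos_lat hd hN₀)] with m hm
    have e : d*(m+j) = d*m + d*j := by ring
    rw [e, div_mul_div_comm, mul_comm (p (d*m+d*j+d)) (p (d*m+d*j)),
      mul_div_mul_left _ _ (by rw [← e]; exact hm.ne')]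
    have e2 : d*m + d*(j+1) = d*m + d*j + d := by ring
    rw [e2]

lemma my_ratio_sub (hd : 1 ≤ d) (hN₀ : ∀ n, N₀ ≤ n → d ∣ n → 0 < p n)
    (hratio : Tendsto (fun m => p (d*m) / p (d*m+d)) atTop (nhds 1)) (j : ℕ) :
    Tendsto (fun m => p (d*m - d*j) / p (d*m)) atTop (nhds 1) := by
  have h := (my_ratio_pow hd hN₀ hratio j).inv₀ one_ne_zero
  rw [inv_one] at h
  have h2 := h.comp (tendsto_sub_atTop_nat j)
  refine h2.congr' ?_
  filter_upwards [eventually_ge_atTop j] with m hm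
  have e : d*(m-j) + d*j = d*m := by rw [← Nat.mul_add, Nat.sub_add_cancel hm]
  show (p (d*(m-j) + d*j) / p (d*(m-j)))⁻¹ = _
  rw [inv_div, ← Nat.mul_sub, e]

lemma my_head (hd : 1 ≤ d) (hN₀ : ∀ n, N₀ ≤ n → d ∣ n → 0 < p n)
    (hratio : Tendsto (fun m => p (d*m) / p (d*m+d)) atTop (nhds 1))
    (a : ℕ → ℝ) (halat : ∀ n, ¬ d ∣ n → a n = 0) (M : ℕ) :
    Tendsto (fun m => (∑ i ∈ Finset.range (M+1), a i * p (d*m - i)) / p (d*m)) atTop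
      (nhds (∑ i ∈ Finset.range (M+1), a i)) := by
  have e : ∀ m, (∑ i ∈ Finset.range (M+1), a i * p (d*m - i)) / p (d*m)
      = ∑ i ∈ Finset.range (M+1), a i * (p (d*m - i) / p (d*m)) := by
    intro m
    rw [Finset.sum_div]
    exact Finset.sum_congr rfl fun i _ => mul_div_assoc _ _ _
  simp only [e]
  refine tendsto_finset_sum _ (fun i _ => ?_)
  by_cases hdi : d ∣ i
  · obtain ⟨j, rfl⟩ := hdi
    have h := (my_ratio_sub hd hN₀ hratio j).const_mul (a (d*j))
    rwa [mul_one] at h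
  · simp only [halat i hdi, zero_mul]
    exact tendsto_const_nhds

lemma my_tail (hd : 1 ≤ d) (hN₀ : ∀ n, N₀ ≤ n → d ∣ n → 0 < p n)
    (hratio : Tendsto (fun m => p (d*m) / p (d*m+d)) atTop (nhds 1))
    (a : ℕ → ℝ) (c : ℝ)
    (hc : Tendsto (fun m => a (d*m) / p (d*m)) atTop (nhds c))
    (hplat : ∀ n, ¬ d ∣ n → p n = 0) (M : ℕ) :
    Tendsto (fun m => (∑ j ∈ Finset.range (M+1), a (d*m - j) * p j) / p (d*m)) atTop
      (nhds (∑ j ∈ Finset.range (M+1), c * p j)) := by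
  have e : ∀ m, (∑ j ∈ Finset.range (M+1), a (d*m - j) * p j) / p (d*m)
      = ∑ j ∈ Finset.range (M+1), a (d*m - j) * p j / p (d*m) := by
    intro m; rw [Finset.sum_div]
  simp only [e]
  refine tendsto_finset_sum _ (fun j _ => ?_)
  by_cases hdj : d ∣ j
  · obtain ⟨j', rfl⟩ := hdj
    have h1 : Tendsto (fun m => a (d*(m - j')) / p (d*(m - j'))) atTop (nhds c) :=
      hc.comp (tendsto_sub_atTop_nat j')
    have h3 := (h1.mul (my_ratio_sub hd hN₀ hratio j')).mul_const (p (d*j'))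
    rw [mul_one] at h3
    refine h3.congr' ?_
    filter_upwards [eventually_ge_atTop (j' + N₀)] with m hm
    have hmN : N₀ ≤ m := by omega
    have he : d*m - d*j' = d*(m - j') := by rw [← Nat.mul_sub]
    have hy : 0 < p (d*(m - j')) :=
      hN₀ _ (le_trans (by omega) (Nat.le_mul_of_pos_left (m - j') (by omega))) ⟨m - j', rfl⟩
    have hz : 0 < p (d*m) :=
      hN₀ _ (le_trans hmN (Nat.le_mul_of_pos_left m (by omega))) ⟨m, rfl⟩
    show a (d*(m - j')) / p (d*(m - j')) * (p (d*m - d*j') / p (d*m)) * p (d*j')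
        = a (d*m - d*j') * p (d*j') / p (d*m)
    rw [he]
    field_simp
  · simp only [hplat j hdj, mul_zero, zero_div]
    exact tendsto_const_nhds

lemma my_split (F : ℕ → ℝ) (M n : ℕ) (h : 2*M + 1 ≤ n) :
    ∑ i ∈ Finset.range (n+1), F i =
      (∑ i ∈ Finset.range (M+1), F i) + (∑ i ∈ Finset.Ico (M+1) (n-M), F i)
        + (∑ i ∈ Finset.Ico (n-M) (n+1), F i) := by
  simp only [Finset.range_eq_Ico]
  rw [add_assoc, Finset.sum_Ico_consecutive F (by omega) (by omega),
    Finset.sum_Ico_consecutive F (by omega) (by omega)]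

lemma my_reflect (a p : ℕ → ℝ) (M n : ℕ) (h : 2*M + 1 ≤ n) :
    ∑ i ∈ Finset.Ico (n-M) (n+1), a i * p (n - i)
      = ∑ j ∈ Finset.range (M+1), a (n - j) * p j := by
  refine Finset.sum_nbij' (fun i => n - i) (fun j => n - j) ?_ ?_ ?_ ?_ ?_
  · intro i hi; simp only [Finset.mem_Ico] at hi; simp only [Finset.mem_range]; omega
  · intro j hj; simp only [Finset.mem_range] at hj; simp only [Finset.mem_Ico]; omega
  · intro i hi; simp only [Finset.mem_Ico] at hi; show n - (n - i) = i; omega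
  · intro j hj; simp only [Finset.mem_range] at hj; show n - (n - j) = j; omega
  · intro i hi; simp only [Finset.mem_Ico] at hi
    have : n - (n - i) = i := by omega
    rw [this]

end Helpers

lemma my_key (d : ℕ) (hd : 1 ≤ d) (p : ℕ → ℝ) (hnn : ∀ n, 0 ≤ p n)
    (hlat : ∀ n, ¬ d ∣ n → p n = 0) (N₀ : ℕ) (hN₀ : ∀ n, N₀ ≤ n → d ∣ n → 0 < p n)
    (hratio : Tendsto (fun m => p (d*m) / p (d*m+d)) atTop (nhds 1))
    (hpsum : Summable p) (hpsum1 : ∑' n, p n = 1)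
    (hconv : Tendsto (fun m => (∑ i ∈ Finset.range (d*m+1), p i * p (d*m - i)) / p (d*m))
      atTop (nhds 2))
    (a : ℕ → ℝ) (hann : ∀ n, 0 ≤ a n) (halat : ∀ n, ¬ d ∣ n → a n = 0)
    (hasum : Summable a) (c : ℝ)
    (hc : Tendsto (fun m => a (d*m) / p (d*m)) atTop (nhds c)) :
    Tendsto (fun m => (∑ i ∈ Finset.range (d*m+1), a i * p (d*m - i)) / p (d*m)) atTop
      (nhds (c + ∑' n, a n)) := by
  have hc0 : 0 ≤ c := ge_of_tendsto' hc (fun m => div_nonneg (hann _) (hnn _))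
  set C := c + 1 with hCdef
  have hC : 0 < C := by linarith
  clear_value C
  rw [Metric.tendsto_atTop]
  intro ε hε
  set ε' := ε / (4 + 4*C) with hε'def
  have hε' : 0 < ε' := div_pos hε (by linarith)
  have hεeq : ε' * (4 + 4*C) = ε := div_mul_cancel₀ ε (by linarith)
  clear_value ε'
  -- ratio bound threshold
  have hCb : ∀ᶠ m in atTop, a (d*m) ≤ C * p (d*m) := by
    filter_upwards [hc.eventually_lt_const (lt_add_one c), eventually_ge_atTop N₀] with m h1 h2
    have hpm : 0 < p (d*m) := hN₀ _ (le_trans h2 (Nat.le_mul_of_pos_left m (by omega))) ⟨m, rfl⟩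
    have := (div_lt_iff₀ hpm).mp h1
    rw [hCdef]
    linarith
  obtain ⟨M₁, hM₁⟩ := eventually_atTop.mp hCb
  -- choose the cutoff t
  have htt : Tendsto (fun t => d*t+1) atTop atTop :=
    tendsto_atTop_mono
      (fun t => le_trans (Nat.le_mul_of_pos_left t (by omega)) (Nat.le_succ _)) tendsto_id
  have hAten : Tendsto (fun t => ∑ i ∈ Finset.range (d*t+1), a i) atTop (nhds (∑' n, a n)) :=
    hasum.hasSum.tendsto_sum_nat.comp htt
  have hPten : Tendsto (fun t => ∑ i ∈ Finset.range (d*t+1), p i) atTop (nhds 1) := by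
    have := hpsum.hasSum.tendsto_sum_nat.comp htt
    rwa [hpsum1] at this
  obtain ⟨t, ht⟩ := ((hAten.eventually
      (eventually_gt_nhds (show (∑' n, a n) - ε' < ∑' n, a n by linarith))).and
    ((hPten.eventually (eventually_gt_nhds (show 1 - ε' < (1:ℝ) by linarith))).and
      ((eventually_ge_atTop M₁).and (eventually_ge_atTop N₀)))).exists
  obtain ⟨htA, htP, htM₁, htN₀⟩ := ht
  set M := d * t with hMdef
  have hMrange : d * t + 1 = M + 1 := rfl
  rw [hMrange] at htA htP
  have hAle : (∑ i ∈ Finset.range (M+1), a i) ≤ ∑' n, a n :=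
    Summable.sum_le_tsum _ (fun i _ => hann i) hasum
  have hPle : (∑ i ∈ Finset.range (M+1), p i) ≤ 1 :=
    hpsum1 ▸ Summable.sum_le_tsum _ (fun i _ => hnn i) hpsum
  -- head and tail limits
  have hone : Tendsto (fun m => p (d*m) / p (d*m)) atTop (nhds 1) := by
    refine Tendsto.congr' ?_ (tendsto_const_nhds (f := atTop (α := ℕ)))
    filter_upwards [my_pos_lat hd hN₀] with m hm
    exact (div_self hm.ne').symm
  have hHa := my_head hd hN₀ hratio a halat M
  have hTa := my_tail hd hN₀ hratio a c hc hlat M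
  have hHp := my_head hd hN₀ hratio p hlat M
  have hTp := my_tail hd hN₀ hratio p 1 hone hlat M
  rw [← Finset.mul_sum] at hTa hTp
  have hR : Tendsto (fun m =>
      (∑ i ∈ Finset.range (d*m+1), p i * p (d*m - i)) / p (d*m)
      - (∑ i ∈ Finset.range (M+1), p i * p (d*m - i)) / p (d*m)
      - (∑ j ∈ Finset.range (M+1), p (d*m - j) * p j) / p (d*m)) atTop
      (nhds (2 - (∑ i ∈ Finset.range (M+1), p i)
        - 1 * ∑ j ∈ Finset.range (M+1), p j)) := (hconv.sub hHp).sub hTp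
  -- eventual bounds
  obtain ⟨N1, hN1⟩ := Metric.tendsto_atTop.mp hHa ε' hε'
  obtain ⟨N2, hN2⟩ := Metric.tendsto_atTop.mp hTa ε' hε'
  obtain ⟨N3, hN3⟩ := eventually_atTop.mp (hR.eventually (Tendsto.eventually_lt_const
    (show (2 - (∑ i ∈ Finset.range (M+1), p i) - 1 * ∑ j ∈ Finset.range (M+1), p j)
      < (2 - (∑ i ∈ Finset.range (M+1), p i) - 1 * ∑ j ∈ Finset.range (M+1), p j) + ε'
      by linarith) tendsto_id))
  refine ⟨N1 + N2 + N3 + N₀ + (2*M+1), fun m hm => ?_⟩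
  have hn1 : 2*M + 1 ≤ d*m :=
    le_trans (by omega) (Nat.le_mul_of_pos_left m (by omega))
  have hpn : 0 < p (d*m) :=
    hN₀ _ (le_trans (by omega) (Nat.le_mul_of_pos_left m (by omega))) ⟨m, rfl⟩
  -- splitting identities
  have hsplitA := my_split (fun i => a i * p (d*m - i)) M (d*m) hn1
  have hreflA := my_reflect a p M (d*m) hn1
  have hsplitP := my_split (fun i => p i * p (d*m - i)) M (d*m) hn1
  have hreflP := my_reflect p p M (d*m) hn1
  have heqA : (∑ i ∈ Finset.range (d*m+1), a i * p (d*m - i)) / p (d*m)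
      = (∑ i ∈ Finset.range (M+1), a i * p (d*m - i)) / p (d*m)
        + (∑ i ∈ Finset.Ico (M+1) (d*m-M), a i * p (d*m - i)) / p (d*m)
        + (∑ j ∈ Finset.range (M+1), a (d*m - j) * p j) / p (d*m) := by
    rw [hsplitA, hreflA, add_div, add_div]
  have heqP : (∑ i ∈ Finset.range (d*m+1), p i * p (d*m - i)) / p (d*m)
      = (∑ i ∈ Finset.range (M+1), p i * p (d*m - i)) / p (d*m)
        + (∑ i ∈ Finset.Ico (M+1) (d*m-M), p i * p (d*m - i)) / p (d*m)
        + (∑ j ∈ Finset.range (M+1), p (d*m - j) * p j) / p (d*m) := by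
    rw [hsplitP, hreflP, add_div, add_div]
  -- middle bound
  have hmid_le : (∑ i ∈ Finset.Ico (M+1) (d*m-M), a i * p (d*m - i))
      ≤ C * ∑ i ∈ Finset.Ico (M+1) (d*m-M), p i * p (d*m - i) := by
    rw [Finset.mul_sum]
    refine Finset.sum_le_sum (fun i hi => ?_)
    simp only [Finset.mem_Ico] at hi
    by_cases hdi : d ∣ i
    · obtain ⟨i', rfl⟩ := hdi
      have hi' : M₁ ≤ i' := by
        have : t < i' := by
          have : d * t < d * i' := by omega
          exact Nat.lt_of_mul_lt_mul_left this
        omega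
      have hai : a (d*i') ≤ C * p (d*i') := hM₁ i' hi'
      calc a (d*i') * p (d*m - d*i') ≤ (C * p (d*i')) * p (d*m - d*i') :=
            mul_le_mul_of_nonneg_right hai (hnn _)
        _ = C * (p (d*i') * p (d*m - d*i')) := by ring
    · rw [halat i hdi, zero_mul]
      have := mul_nonneg (hnn i) (hnn (d*m - i))
      positivity
  have hmid_nonneg : (0:ℝ) ≤ (∑ i ∈ Finset.Ico (M+1) (d*m-M), a i * p (d*m - i)) / p (d*m) :=
    div_nonneg (Finset.sum_nonneg (fun i _ => mul_nonneg (hann i) (hnn _))) hpn.le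
  have hmidp_eq : (∑ i ∈ Finset.Ico (M+1) (d*m-M), p i * p (d*m - i)) / p (d*m)
      = (∑ i ∈ Finset.range (d*m+1), p i * p (d*m - i)) / p (d*m)
        - (∑ i ∈ Finset.range (M+1), p i * p (d*m - i)) / p (d*m)
        - (∑ j ∈ Finset.range (M+1), p (d*m - j) * p j) / p (d*m) := by
    rw [heqP]; ring
  have hd3 := hN3 m (by omega)
  simp only [id] at hd3
  have hmid_bd : (∑ i ∈ Finset.Ico (M+1) (d*m-M), a i * p (d*m - i)) / p (d*m)
      ≤ C * ((∑ i ∈ Finset.range (d*m+1), p i * p (d*m - i)) / p (d*m)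
        - (∑ i ∈ Finset.range (M+1), p i * p (d*m - i)) / p (d*m)
        - (∑ j ∈ Finset.range (M+1), p (d*m - j) * p j) / p (d*m)) := by
    rw [← hmidp_eq]
    calc (∑ i ∈ Finset.Ico (M+1) (d*m-M), a i * p (d*m - i)) / p (d*m)
        ≤ (C * ∑ i ∈ Finset.Ico (M+1) (d*m-M), p i * p (d*m - i)) / p (d*m) :=
          (div_le_div_iff_of_pos_right hpn).mpr hmid_le
      _ = C * ((∑ i ∈ Finset.Ico (M+1) (d*m-M), p i * p (d*m - i)) / p (d*m)) :=
          mul_div_assoc _ _ _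
  -- distance bounds
  have hd1 := hN1 m (by omega)
  have hd2 := hN2 m (by omega)
  rw [Real.dist_eq] at hd1 hd2
  have habs1 := abs_lt.mp hd1
  have habs2 := abs_lt.mp hd2
  -- assemble
  rw [Real.dist_eq, heqA, abs_lt]
  have hprod1 : c * (1 - ε') ≤ c * ∑ i ∈ Finset.range (M+1), p i :=
    mul_le_mul_of_nonneg_left (by linarith) hc0
  have hprod2 : c * ∑ i ∈ Finset.range (M+1), p i ≤ c * 1 :=
    mul_le_mul_of_nonneg_left hPle hc0
  have hprodC : C * ((2 - (∑ i ∈ Finset.range (M+1), p i)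
      - 1 * ∑ j ∈ Finset.range (M+1), p j) + ε') < C * (3 * ε') := by
    refine mul_lt_mul_of_pos_left ?_ hC
    linarith
  have hmidfinal : (∑ i ∈ Finset.Ico (M+1) (d*m-M), a i * p (d*m - i)) / p (d*m)
      < C * (3 * ε') := by
    refine lt_of_le_of_lt hmid_bd (lt_of_le_of_lt ?_ hprodC)
    exact mul_le_mul_of_nonneg_left hd3.le hC.le
  have hce : c * ε' ≤ C * ε' := mul_le_mul_of_nonneg_right (by linarith) hε'.le
  have hCε : 0 < C * ε' := mul_pos hC hε'
  constructor
  · linarith [habs1.1, habs2.1, hmid_nonneg, hprod1, hce, htA, hCε, hε', hεeq]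
  · linarith [habs1.2, habs2.2, hmidfinal, hprod2, hAle, hCε, hε', hεeq]

open MeasureTheory ProbabilityTheory

section Meas
variable {Ω : Type*} [MeasurableSpace Ω] (μ : Measure Ω) [IsProbabilityMeasure μ]
  (gs : ℕ → Ω → ℕ)

lemma my_meas_rec (hgsmeas : ∀ i, Measurable (gs i))
    (hiid : iIndepFun gs μ) (k n : ℕ) :
    μ {ω | ∑ i ∈ Finset.range (k+1), gs i ω = n}
      = ∑ i ∈ Finset.range (n+1),
          μ {ω | ∑ j ∈ Finset.range k, gs j ω = i} * μ {ω | gs k ω = n - i} := by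
  have hS : Measurable (fun ω => ∑ j ∈ Finset.range k, gs j ω) :=
    Finset.measurable_sum _ (fun j _ => hgsmeas j)
  have hindep : IndepFun (fun ω => ∑ j ∈ Finset.range k, gs j ω) (gs k) μ := by
    have h := hiid.indepFun_sum_range_succ hgsmeas k
    rwa [show (∑ j ∈ Finset.range k, gs j) = (fun ω => ∑ j ∈ Finset.range k, gs j ω)
      from funext fun ω => by simp] at h
  have hset : {ω | ∑ i ∈ Finset.range (k+1), gs i ω = n}
      = ⋃ i ∈ Finset.range (n+1),
          ({ω | (∑ j ∈ Finset.range k, gs j ω) = i} ∩ {ω | gs k ω = n - i}) := by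
    ext ω
    simp only [Set.mem_setOf_eq, Set.mem_iUnion, Set.mem_inter_iff, Finset.mem_range,
      Finset.sum_range_succ]
    constructor
    · intro h
      exact ⟨∑ j ∈ Finset.range k, gs j ω, by omega, rfl, by omega⟩
    · rintro ⟨i, hi, h1, h2⟩
      omega
  rw [hset, measure_biUnion_finset]
  · refine Finset.sum_congr rfl (fun i _ => ?_)
    have := hindep.measure_inter_preimage_eq_mul {i} {n - i}
      (measurableSet_singleton _) (measurableSet_singleton _)
    exact this
  · intro i _ i' _ hne
    simp only [Function.onFun]
    refine Set.disjoint_left.mpr ?_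
    rintro ω ⟨h1, _⟩ ⟨h1', _⟩
    simp only [Set.mem_setOf_eq] at h1 h1'
    exact hne (by omega)
  · intro i _
    exact (hS (measurableSet_singleton i)).inter (hgsmeas k (measurableSet_singleton _))

lemma my_meas_tsum (hgsmeas : ∀ i, Measurable (gs i)) (k : ℕ) :
    Summable (fun n => (μ {ω | ∑ i ∈ Finset.range k, gs i ω = n}).toReal)
      ∧ ∑' n, (μ {ω | ∑ i ∈ Finset.range k, gs i ω = n}).toReal = 1 := by
  have hS : Measurable (fun ω => ∑ j ∈ Finset.range k, gs j ω) :=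
    Finset.measurable_sum _ (fun j _ => hgsmeas j)
  have htsum : ∑' n, μ {ω | ∑ i ∈ Finset.range k, gs i ω = n} = 1 := by
    rw [← measure_iUnion]
    · have : ⋃ n, {ω | ∑ i ∈ Finset.range k, gs i ω = n} = Set.univ := by
        ext ω; simp only [Set.mem_iUnion, Set.mem_setOf_eq, Set.mem_univ, iff_true]
        exact ⟨_, rfl⟩
      rw [this, measure_univ]
    · intro n n' hne
      refine Set.disjoint_left.mpr ?_
      rintro ω h1 h1'
      simp only [Set.mem_setOf_eq] at h1 h1'
      exact hne (by omega)
    · intro n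
      exact hS (measurableSet_singleton n)
  constructor
  · exact ENNReal.summable_toReal (by rw [htsum]; exact ENNReal.one_ne_top)
  · rw [← ENNReal.tsum_toReal_eq (fun n => measure_ne_top μ _), htsum]
    rfl

end Meas

open MeasureTheory ProbabilityTheory

/-- If `g` is an `ℕ`-valued random variable whose density `p` is subexponential on the lattice
`dℕ` (i.e. `p ∈ 𝒮_d` with radius of convergence `1`), `k ≥ 1` is fixed, and `g₁, …, g_k` are
independent copies of `g`, then `ℙ(g₁ + ⋯ + g_k = n) ∼ k · ℙ(g = n)` along multiples of `d`. -/
theorem iid_sum_subexp_equivalence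
    {Ω : Type*} [MeasurableSpace Ω] (μ : Measure Ω) [IsProbabilityMeasure μ]
    (d : ℕ) (p : ℕ → ℝ) (hp : SubexpClass d p 1)
    (k : ℕ) (hk : 1 ≤ k)
    (gs : ℕ → Ω → ℕ) (hgsmeas : ∀ i, Measurable (gs i))
    (hdist : ∀ i n, (μ {ω | gs i ω = n}).toReal = p n)
    (hiid : iIndepFun gs μ) :
    Filter.Tendsto
      (fun m => (μ {ω | ∑ i ∈ Finset.range k, gs i ω = d * m}).toReal / p (d * m))
      Filter.atTop (nhds k) := by
  obtain ⟨hd, hρ, hnn, hlat, ⟨N₀, hN₀⟩, hsumm, hns, hratio, hconv0⟩ := hp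
  rw [one_pow] at hratio
  have hpsum : Summable p := by simpa using hsumm
  -- q 1 = p
  have q1 : ∀ n, (μ {ω | ∑ i ∈ Finset.range 1, gs i ω = n}).toReal = p n := by
    intro n
    have e : {ω | ∑ i ∈ Finset.range 1, gs i ω = n} = {ω | gs 0 ω = n} := by
      ext ω; simp [Finset.sum_range_one]
    rw [e, hdist 0 n]
  have hpsum1 : ∑' n, p n = 1 := by
    rw [← tsum_congr q1]
    exact (my_meas_tsum μ gs hgsmeas 1).2
  have hconv : Tendsto
      (fun m => (∑ i ∈ Finset.range (d * m + 1), p i * p (d * m - i)) / p (d * m))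
      atTop (nhds 2) := by
    have e : (2 * ∑' n, p n * (1:ℝ) ^ n) = 2 := by
      simp only [one_pow, mul_one]
      rw [hpsum1]; norm_num
    rwa [e] at hconv0
  -- recursion for densities
  have q_rec : ∀ k n, (μ {ω | ∑ i ∈ Finset.range (k+1), gs i ω = n}).toReal
      = ∑ i ∈ Finset.range (n+1),
          (μ {ω | ∑ j ∈ Finset.range k, gs j ω = i}).toReal * p (n - i) := by
    intro k n
    rw [my_meas_rec μ gs hgsmeas hiid k n,
      ENNReal.toReal_sum (fun i _ => ENNReal.mul_ne_top (measure_ne_top μ _) (measure_ne_top μ _))]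
    refine Finset.sum_congr rfl fun i _ => ?_
    rw [ENNReal.toReal_mul, hdist k (n - i)]
  -- lattice support of k-fold sums
  have qlat : ∀ k, 1 ≤ k → ∀ n, ¬ d ∣ n →
      (μ {ω | ∑ i ∈ Finset.range k, gs i ω = n}).toReal = 0 := by
    intro k hk
    induction k, hk using Nat.le_induction with
    | base => intro n hn; rw [q1 n]; exact hlat n hn
    | succ k hk ih =>
      intro n hn
      rw [q_rec k n]
      refine Finset.sum_eq_zero fun i hi => ?_
      simp only [Finset.mem_range] at hi
      by_cases hdi : d ∣ i
      · have : ¬ d ∣ (n - i) := by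
          intro hc
          have h2 := Nat.dvd_add hdi hc
          rw [Nat.add_sub_cancel' (by omega : i ≤ n)] at h2
          exact hn h2
        rw [hlat _ this, mul_zero]
      · rw [ih i hdi, zero_mul]
  -- main induction
  induction k, hk using Nat.le_induction with
  | base =>
    have h : Tendsto (fun m => (μ {ω | ∑ i ∈ Finset.range 1, gs i ω = d * m}).toReal
        / p (d * m)) atTop (nhds 1) := by
      refine Tendsto.congr' ?_ (tendsto_const_nhds (f := atTop (α := ℕ)))
      filter_upwards [my_pos_lat hd hN₀] with m hm
      rw [q1, div_self hm.ne']
    simpa using h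
  | succ k hk ih =>
    have hkey := my_key d hd p hnn hlat N₀ hN₀ hratio hpsum hpsum1 hconv
      (fun n => (μ {ω | ∑ i ∈ Finset.range k, gs i ω = n}).toReal)
      (fun n => ENNReal.toReal_nonneg) (qlat k hk)
      (my_meas_tsum μ gs hgsmeas k).1 k ih
    rw [(my_meas_tsum μ gs hgsmeas k).2] at hkey
    have hcast : ((k : ℝ) + 1) = ((k + 1 : ℕ) : ℝ) := by push_cast; ring
    rw [hcast] at hkey
    refine hkey.congr fun m => ?_
    rw [← q_rec k (d * m)]
end

section
/- Let d ≥ 1 be an integer, let g be an ℕ₀-valued random variable with subexponential density on the lattice dℕ, and let Y be an ℕ₀-valued random variable, independent of g, almost surely divisible by d, with 𝔼[(1+δ)^Y] < ∞ for some δ > 0. Then ℙ(g + Y = n) ~ ℙ(g = n) as n → ∞ along multiples of d. -/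
open MeasureTheory ProbabilityTheory Filter
open scoped ENNReal

lemma aux_ratio_shift {d N : ℕ} {p : ℕ → ℝ} (hd : 1 ≤ d)
    (hpos : ∀ n, N ≤ n → d ∣ n → 0 < p n)
    (hr : Tendsto (fun m => p (d * m) / p (d * m + d)) atTop (nhds 1)) :
    ∀ j, Tendsto (fun m => p (d * m) / p (d * (m + j))) atTop (nhds 1) := by
  have hposm : ∀ m, N ≤ m → 0 < p (d * m) := fun m hm =>
    hpos (d * m) (le_trans hm (Nat.le_mul_of_pos_left m (by omega))) ⟨m, rfl⟩
  intro j
  induction j with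
  | zero =>
    refine Tendsto.congr' ?_ tendsto_const_nhds
    filter_upwards [eventually_ge_atTop N] with m hm
    simp [div_self (hposm m hm).ne']
  | succ j ih =>
    have h2 : Tendsto (fun m => p (d * (m + j)) / p (d * (m + j) + d)) atTop (nhds 1) :=
      hr.comp (tendsto_add_atTop_nat j)
    have := ih.mul h2
    rw [mul_one] at this
    refine Tendsto.congr' ?_ this
    filter_upwards [eventually_ge_atTop N] with m hm
    have hb : p (d * (m + j)) ≠ 0 := (hposm (m + j) (by omega)).ne'
    have : d * (m + j) + d = d * (m + j + 1) := by ring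
    rw [this]
    field_simp
    ring_nf

lemma aux_ratio_sub {d N : ℕ} {p : ℕ → ℝ} (hd : 1 ≤ d)
    (hpos : ∀ n, N ≤ n → d ∣ n → 0 < p n)
    (hr : Tendsto (fun m => p (d * m) / p (d * m + d)) atTop (nhds 1)) :
    ∀ j, Tendsto (fun m => p (d * (m - j)) / p (d * m)) atTop (nhds 1) := by
  intro j
  have h := (aux_ratio_shift hd hpos hr j).comp (tendsto_sub_atTop_nat j)
  refine Tendsto.congr' ?_ h
  filter_upwards [eventually_ge_atTop j] with m hm
  simp only [Function.comp_apply]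
  rw [Nat.sub_add_cancel hm]

lemma aux_chain {d M : ℕ} {p : ℕ → ℝ} {δ : ℝ} (hδ : 0 < δ)
    (hM : ∀ m, M ≤ m → p (d * m) ≤ (1 + δ) * p (d * (m + 1))) :
    ∀ a, M ≤ a → ∀ k, p (d * a) ≤ (1 + δ) ^ k * p (d * (a + k)) := by
  intro a ha k
  induction k with
  | zero => simp
  | succ k ih =>
    calc p (d*a) ≤ (1+δ)^k * p (d*(a+k)) := ih
    _ ≤ (1+δ)^k * ((1+δ) * p (d*(a+k+1))) :=
        mul_le_mul_of_nonneg_left (hM (a+k) (by omega)) (by positivity)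
    _ = (1+δ)^(k+1) * p (d*(a+(k+1))) := by rw [pow_succ]; ring_nf

lemma aux_dom {d M : ℕ} {p : ℕ → ℝ} {δ T C : ℝ} (hδ : 0 < δ)
    (hnn : ∀ n, 0 ≤ p n)
    (hpT : ∀ n, p n ≤ T)
    (hposM : 0 < p (d * M))
    (hM : ∀ m, M ≤ m → p (d * m) ≤ (1 + δ) * p (d * (m + 1)))
    (hC1 : 1 ≤ C) (hC2 : T / p (d*M) ≤ C) :
    ∀ m, M ≤ m → ∀ j, j ≤ m → p (d * (m - j)) ≤ C * (1 + δ) ^ j * p (d * m) := by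
  intro m hm j hj
  have hpm : (0:ℝ) ≤ p (d*m) := hnn _
  have hpow0 : (0:ℝ) ≤ (1+δ)^j := by positivity
  rcases le_or_gt M (m - j) with h | h
  · have hch := aux_chain hδ hM (m-j) h j
    rw [Nat.sub_add_cancel hj] at hch
    calc p (d*(m-j)) ≤ (1+δ)^j * p (d*m) := hch
    _ ≤ C * (1+δ)^j * p (d*m) := by nlinarith [mul_nonneg hpow0 hpm]
  · have hchain := aux_chain hδ hM M le_rfl (m - M)
    rw [Nat.add_sub_cancel' hm] at hchain
    have hmMj : m - M ≤ j := by omega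
    have hpow : (1+δ)^(m-M) ≤ (1+δ)^j := pow_le_pow_right₀ (by linarith) hmMj
    have hT0 : 0 < T := lt_of_lt_of_le hposM (hpT _)
    calc p (d*(m-j)) ≤ T := hpT _
    _ = (T / p (d*M)) * p (d*M) := by field_simp
    _ ≤ (T / p (d*M)) * ((1+δ)^(m-M) * p (d*m)) :=
        mul_le_mul_of_nonneg_left hchain (div_nonneg hT0.le hposM.le)
    _ ≤ C * ((1+δ)^j * p (d*m)) :=
        mul_le_mul hC2 (mul_le_mul_of_nonneg_right hpow hpm) (by positivity) (by linarith)
    _ = C * (1+δ)^j * p (d*m) := by ring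

lemma aux_conv {Ω : Type*} [MeasurableSpace Ω] (μ : Measure Ω) [IsProbabilityMeasure μ]
    (g Y : Ω → ℕ) (hgmeas : Measurable g) (hYmeas : Measurable Y)
    (hindep : IndepFun g Y μ) (n : ℕ) :
    (μ {ω | g ω + Y ω = n}).toReal
      = ∑ k ∈ Finset.range (n+1), (μ {ω | g ω = n - k}).toReal * (μ {ω | Y ω = k}).toReal := by
  have hset : {ω | g ω + Y ω = n}
      = ⋃ k ∈ Finset.range (n+1), (g ⁻¹' {n - k} ∩ Y ⁻¹' {k}) := by
    ext ω
    simp only [Set.mem_setOf_eq, Set.mem_iUnion, Finset.mem_range, Set.mem_inter_iff,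
      Set.mem_preimage, Set.mem_singleton_iff]
    constructor
    · intro h; exact ⟨Y ω, by omega, by omega, rfl⟩
    · rintro ⟨k, hk, h1, h2⟩; omega
  rw [hset, measure_biUnion_finset ?_ ?_]
  · rw [ENNReal.toReal_sum (fun k _ => measure_ne_top μ _)]
    refine Finset.sum_congr rfl (fun k _ => ?_)
    rw [hindep.measure_inter_preimage_eq_mul _ _ (measurableSet_singleton _)
      (measurableSet_singleton _), ENNReal.toReal_mul]
    rfl
  · intro i hi j hj hij
    simp only [Function.onFun, Set.disjoint_left]
    rintro ω ⟨-, h2⟩ ⟨-, h4⟩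
    simp only [Set.mem_preimage, Set.mem_singleton_iff] at h2 h4
    exact hij (h2 ▸ h4 ▸ rfl)
  · exact fun k _ => (hgmeas (measurableSet_singleton _)).inter (hYmeas (measurableSet_singleton _))

lemma aux_tsum_one {Ω : Type*} [MeasurableSpace Ω] (μ : Measure Ω) [IsProbabilityMeasure μ]
    (Y : Ω → ℕ) (hYmeas : Measurable Y) :
    ∑' k : ℕ, (μ {ω | Y ω = k}).toReal = 1 := by
  have h : (∑' k : ℕ, μ (Y ⁻¹' {k})) = 1 := by
    rw [← measure_iUnion ?_ (fun k => hYmeas (measurableSet_singleton k))]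
    · have : ⋃ k : ℕ, Y ⁻¹' {k} = Set.univ := by ext ω; simp
      rw [this, measure_univ]
    · intro i j hij
      simp only [Function.onFun, Set.disjoint_left, Set.mem_preimage, Set.mem_singleton_iff]
      rintro ω rfl h; exact hij h
  have := ENNReal.tsum_toReal_eq (f := fun k : ℕ => μ (Y ⁻¹' {k})) (fun k => measure_ne_top μ _)
  rw [h] at this
  exact (by simpa using this.symm : ∑' k : ℕ, (μ (Y ⁻¹' {k})).toReal = 1)

lemma aux_summable {Ω : Type*} [MeasurableSpace Ω] (μ : Measure Ω) [IsProbabilityMeasure μ]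
    (Y : Ω → ℕ) (hYmeas : Measurable Y) {c : ℝ} (hc : 0 < c)
    (hint : Integrable (fun ω => c ^ (Y ω)) μ) :
    Summable (fun k => c ^ k * (μ {ω | Y ω = k}).toReal) := by
  have h1 : (fun ω => (‖c ^ (Y ω)‖₊ : ℝ≥0∞)) = fun ω => ENNReal.ofReal (c ^ (Y ω)) :=
    funext fun ω => Real.enorm_eq_ofReal (by positivity)
  have hfin : ∫⁻ ω, ENNReal.ofReal (c ^ (Y ω)) ∂μ < ⊤ := by
    rw [← h1]; exact hint.2
  have hmap : ∫⁻ ω, ENNReal.ofReal (c ^ (Y ω)) ∂μ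
      = ∑' k : ℕ, ENNReal.ofReal (c ^ k) * μ (Y ⁻¹' {k}) := by
    rw [← lintegral_map (f := fun k : ℕ => ENNReal.ofReal (c ^ k)) measurable_from_top hYmeas,
      lintegral_countable']
    exact tsum_congr fun k => by rw [Measure.map_apply hYmeas (measurableSet_singleton k)]
  rw [hmap] at hfin
  have hsum := ENNReal.summable_toReal hfin.ne
  refine hsum.congr fun k => ?_
  rw [ENNReal.toReal_mul, ENNReal.toReal_ofReal (by positivity)]
  rfl


open MeasureTheory ProbabilityTheory

/-- If `g` is an `ℕ`-valued random variable whose density `p` is subexponential on the lattice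
`dℕ` (i.e. `p ∈ 𝒮_d` with radius of convergence `1`), and `Y` is an `ℕ`-valued random variable
independent of `g`, a.s. divisible by `d`, with `𝔼[(1+δ)^Y] < ∞` for some `δ > 0`, then
`ℙ(g + Y = n) ∼ ℙ(g = n)` along multiples of `d`. -/
theorem subexp_plus_light_tail_equivalence
    {Ω : Type*} [MeasurableSpace Ω] (μ : Measure Ω) [IsProbabilityMeasure μ]
    (d : ℕ) (p : ℕ → ℝ) (hp : SubexpClass d p 1)
    (g Y : Ω → ℕ) (hgmeas : Measurable g) (hYmeas : Measurable Y)
    (hdist : ∀ n, (μ {ω | g ω = n}).toReal = p n)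
    (hindep : IndepFun g Y μ)
    (hdvd : ∀ᵐ ω ∂μ, d ∣ Y ω)
    (hexp : ∃ δ : ℝ, 0 < δ ∧ Integrable (fun ω => (1 + δ) ^ (Y ω)) μ) :
    Filter.Tendsto
      (fun m => (μ {ω | g ω + Y ω = d * m}).toReal / p (d * m))
      Filter.atTop (nhds 1) := by
  obtain ⟨hd, -, hnn, hzero, ⟨N, hNpos⟩, hsum1, -, hratio, -⟩ := hp
  obtain ⟨δ, hδ, hint⟩ := hexp
  have hsump : Summable p := by simpa using hsum1
  set T := ∑' n, p n with hT
  have hpT : ∀ n, p n ≤ T := fun n => Summable.le_tsum hsump n (fun m _ => hnn m)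
  set q : ℕ → ℝ := fun k => (μ {ω | Y ω = k}).toReal with hq
  have hqnn : ∀ k, 0 ≤ q k := fun k => ENNReal.toReal_nonneg
  have hq0 : ∀ k, ¬ d ∣ k → q k = 0 := by
    intro k hk
    have hsub : {ω | Y ω = k} ⊆ {ω | ¬ d ∣ Y ω} := by
      intro ω hω
      simp only [Set.mem_setOf_eq] at *
      rw [hω]; exact hk
    have hnull : μ {ω | Y ω = k} = 0 :=
      measure_mono_null hsub (by simpa [ae_iff] using hdvd)
    simp [hq, hnull]
  have hqsum : Summable (fun k => (1+δ)^k * q k) := aux_summable μ Y hYmeas (by linarith) hint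
  have hqone : ∑' k, q k = 1 := aux_tsum_one μ Y hYmeas
  have hr1 : Tendsto (fun m => p (d*m) / p (d*m+d)) atTop (nhds 1) := by simpa using hratio
  have hposm : ∀ m, N ≤ m → 0 < p (d*m) := fun m hm =>
    hNpos (d*m) (le_trans hm (Nat.le_mul_of_pos_left m (by omega))) ⟨m, rfl⟩
  -- choose threshold M
  have hev : ∀ᶠ m in atTop, p (d*m) ≤ (1+δ) * p (d*(m+1)) := by
    have h2 : ∀ᶠ m in atTop, p (d*m) / p (d*m+d) < 1+δ :=
      hr1.eventually_lt_const (by linarith)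
    filter_upwards [h2, eventually_ge_atTop N] with m hlt hm
    have hpos : 0 < p (d*(m+1)) := hposm (m+1) (by omega)
    have heq : d*m + d = d*(m+1) := by ring
    rw [heq] at hlt
    rw [div_lt_iff₀ hpos] at hlt
    linarith
  obtain ⟨M0, hM0⟩ := eventually_atTop.mp hev
  set M := max M0 N with hM
  have hMdef : ∀ m, M ≤ m → p (d*m) ≤ (1+δ) * p (d*(m+1)) :=
    fun m hm => hM0 m (le_trans (le_max_left _ _) hm)
  have hposM : ∀ m, M ≤ m → 0 < p (d*m) :=
    fun m hm => hposm m (le_trans (le_max_right _ _) hm)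
  set C := max 1 (T / p (d*M)) with hC
  have hC1 : (1:ℝ) ≤ C := le_max_left _ _
  have hdom : ∀ m, M ≤ m → ∀ j, j ≤ m → p (d*(m-j)) ≤ C * (1+δ)^j * p (d*m) :=
    aux_dom hδ hnn hpT (hposM M le_rfl) hMdef hC1 (le_max_right _ _)
  -- the family
  set F : ℕ → ℕ → ℝ := fun m k => (if k ≤ d*m then p (d*m - k) * q k else 0) / p (d*m) with hF
  have hFsum : ∀ m, (μ {ω | g ω + Y ω = d*m}).toReal / p (d*m) = ∑' k, F m k := by
    intro m
    have h1 : (μ {ω | g ω + Y ω = d*m}).toReal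
        = ∑ k ∈ Finset.range (d*m+1), p (d*m - k) * q k := by
      rw [aux_conv μ g Y hgmeas hYmeas hindep]
      exact Finset.sum_congr rfl (fun k _ => by rw [hdist])
    rw [h1, Finset.sum_div]
    rw [tsum_eq_sum (s := Finset.range (d*m+1))
      (fun k hk => by
        have : ¬ k ≤ d*m := by simp only [Finset.mem_range] at hk; omega
        simp [hF, this])]
    exact Finset.sum_congr rfl (fun k hk => by
      have : k ≤ d*m := by simp only [Finset.mem_range] at hk; omega
      simp [hF, this])
  have hlim : ∀ k, Tendsto (fun m => F m k) atTop (nhds (q k)) := by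
    intro k
    by_cases hdk : d ∣ k
    · obtain ⟨j, rfl⟩ := hdk
      have hrat := aux_ratio_sub hd hNpos hr1 j
      have := hrat.mul_const (q (d*j))
      rw [one_mul] at this
      refine Tendsto.congr' ?_ this
      filter_upwards [eventually_ge_atTop j] with m hm
      have hle : d*j ≤ d*m := Nat.mul_le_mul_left d hm
      have hsub : d*m - d*j = d*(m-j) := (Nat.mul_sub d m j).symm
      simp only [hF, if_pos hle, hsub]
      ring
    · have : (fun m => F m k) = fun _ => 0 := by
        funext m
        simp [hF, hq0 k hdk]
      rw [this, hq0 k hdk]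
      exact tendsto_const_nhds
  have hbd : ∀ᶠ m in atTop, ∀ k, ‖F m k‖ ≤ C * ((1+δ)^k * q k) := by
    filter_upwards [eventually_ge_atTop M] with m hm k
    have hpm : 0 < p (d*m) := hposM m hm
    have hbnd0 : (0:ℝ) ≤ C * ((1+δ)^k * q k) :=
      mul_nonneg (by linarith) (mul_nonneg (by positivity) (hqnn k))
    have hFnn : 0 ≤ F m k := by
      apply div_nonneg _ hpm.le
      split
      · exact mul_nonneg (hnn _) (hqnn _)
      · exact le_refl 0
    rw [Real.norm_of_nonneg hFnn]
    by_cases hk : k ≤ d*m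
    · by_cases hdk : d ∣ k
      · obtain ⟨j, rfl⟩ := hdk
        have hj : j ≤ m := Nat.le_of_mul_le_mul_left hk (by omega)
        have hsub : d*m - d*j = d*(m-j) := (Nat.mul_sub d m j).symm
        have hdom' := hdom m hm j hj
        have hqk := hqnn (d*j)
        simp only [hF, if_pos hk, hsub]
        rw [div_le_iff₀ hpm]
        have hjle : j ≤ d*j := Nat.le_mul_of_pos_left j (by omega)
        have hpowle : (1+δ)^j ≤ (1+δ)^(d*j) := pow_le_pow_right₀ (by linarith) hjle
        calc p (d*(m-j)) * q (d*j) ≤ (C * (1+δ)^j * p (d*m)) * q (d*j) :=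
              mul_le_mul_of_nonneg_right hdom' hqk
        _ = (C * q (d*j) * p (d*m)) * (1+δ)^j := by ring
        _ ≤ (C * q (d*j) * p (d*m)) * (1+δ)^(d*j) :=
              mul_le_mul_of_nonneg_left hpowle
                (mul_nonneg (mul_nonneg (by linarith) hqk) hpm.le)
        _ = C * ((1+δ)^(d*j) * q (d*j)) * p (d*m) := by ring
      · have : F m k = 0 := by simp [hF, hq0 k hdk]
        rw [this]; exact hbnd0
    · simp only [hF, if_neg hk, zero_div]
      exact hbnd0
  have hmain := tendsto_tsum_of_dominated_convergence
    (hqsum.mul_left C) hlim hbd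
  rw [hqone] at hmain
  exact Tendsto.congr (fun m => (hFsum m).symm) hmain
end

section
/- Let d ≥ 1 be an integer and let (g_k)_{k≥1} be non-negative integers with g_k = 0 unless d | k, such that g(z) = Σ_{k≥1} g_k z^k belongs to the class S_d with radius of convergence ρ ∈ (0,1) and g(ρ) < 1. Define C(z) = Σ_{k≥1} (φ(k)/k)·log(1/(1 − g(z^k))), where φ is Euler's totient function and the right-hand side is expanded as a power series (each coefficient is a well-defined finite non-negative real). Then [z^n] C(z) ~ (1 − g(ρ))^{−1}·[z^n] g(z) as n → ∞ along multiples of d. -/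
open Filter Finset PowerSeries

namespace CycleAux

/-- coefficient of the μ-th power of the series with coefficients `b`. -/
noncomputable def Pc (b : ℕ → ℝ) (μ n : ℕ) : ℝ :=
  PowerSeries.coeff n ((PowerSeries.mk b) ^ μ)

/-- Hypotheses on the weighted sequence `b n = a n * ρ^n`. -/
structure Hyp (d : ℕ) (b : ℕ → ℝ) : Prop where
  hd : 1 ≤ d
  nonneg : ∀ n, 0 ≤ b n
  supp : ∀ n, ¬ d ∣ n → b n = 0
  hsum : Summable b
  lt_one : (∑' n, b n) < 1
  pos : ∃ N, ∀ n, N ≤ n → d ∣ n → 0 < b n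
  ratio : Filter.Tendsto (fun m => b (d*m) / b (d*(m+1))) atTop (nhds 1)
  conv : Filter.Tendsto (fun m => (∑ i ∈ range (d*m+1), b i * b (d*m - i)) / b (d*m))
    atTop (nhds (2 * ∑' n, b n))

lemma Pc_one (b : ℕ → ℝ) (n : ℕ) : Pc b 1 n = b n := by
  simp [Pc]

lemma Pc_succ (b : ℕ → ℝ) (μ n : ℕ) :
    Pc b (μ+1) n = ∑ i ∈ range (n+1), b i * Pc b μ (n - i) := by
  rw [Pc, pow_succ', PowerSeries.coeff_mul,
    Finset.Nat.sum_antidiagonal_eq_sum_range_succ_mk]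
  simp [Pc]

lemma Pc_nonneg {b : ℕ → ℝ} (hb : ∀ n, 0 ≤ b n) (μ : ℕ) (hμ : 1 ≤ μ) (n : ℕ) :
    0 ≤ Pc b μ n := by
  induction μ, hμ using Nat.le_induction generalizing n with
  | base => rw [Pc_one]; exact hb n
  | succ μ hμ ih =>
    rw [Pc_succ]
    exact Finset.sum_nonneg fun i _ => mul_nonneg (hb i) (ih _)

lemma Pc_supp {d : ℕ} {b : ℕ → ℝ} (hsupp : ∀ n, ¬ d ∣ n → b n = 0)
    (μ : ℕ) (hμ : 1 ≤ μ) : ∀ n, ¬ d ∣ n → Pc b μ n = 0 := by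
  induction μ, hμ using Nat.le_induction with
  | base => intro n hn; rw [Pc_one]; exact hsupp n hn
  | succ μ hμ ih =>
    intro n hn
    rw [Pc_succ]
    apply Finset.sum_eq_zero
    intro i hi
    rcases em (d ∣ i) with hdi | hdi
    · rcases em (d ∣ (n - i)) with hdn | hdn
      · exfalso; apply hn
        have hin : i ≤ n := by simpa using Nat.lt_succ_iff.mp (Finset.mem_range.mp hi)
        have h2 := Nat.dvd_add hdi hdn
        rwa [Nat.add_sub_cancel' hin] at h2
      · rw [ih _ hdn, mul_zero]
    · rw [hsupp i hdi, zero_mul]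

lemma Pc_le {b : ℕ → ℝ} (hb : ∀ n, 0 ≤ b n) (hsum : Summable b)
    (μ : ℕ) (hμ : 1 ≤ μ) (n : ℕ) : Pc b μ n ≤ (∑' k, b k) ^ μ := by
  induction μ, hμ using Nat.le_induction generalizing n with
  | base => rw [Pc_one, pow_one]; exact Summable.le_tsum hsum n fun k _ => hb k
  | succ μ hμ ih =>
    rw [Pc_succ, pow_succ']
    calc ∑ i ∈ range (n+1), b i * Pc b μ (n - i)
        ≤ ∑ i ∈ range (n+1), b i * (∑' k, b k) ^ μ := by
          apply Finset.sum_le_sum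
          intro i _
          exact mul_le_mul_of_nonneg_left (ih _) (hb i)
      _ = (∑ i ∈ range (n+1), b i) * (∑' k, b k) ^ μ := by rw [← Finset.sum_mul]
      _ ≤ (∑' k, b k) * (∑' k, b k) ^ μ := by
          apply mul_le_mul_of_nonneg_right _ (pow_nonneg (tsum_nonneg hb) μ)
          exact Summable.sum_le_tsum _ (fun k _ => hb k) hsum

lemma Pc_summable {b : ℕ → ℝ} (hb : ∀ n, 0 ≤ b n) (hsum : Summable b)
    (μ : ℕ) (hμ : 1 ≤ μ) :
    Summable (Pc b μ) ∧ (∑' n, Pc b μ n) = (∑' k, b k) ^ μ := by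
  induction μ, hμ using Nat.le_induction with
  | base =>
    constructor
    · exact hsum.congr fun n => (Pc_one b n).symm
    · rw [pow_one]; exact tsum_congr fun n => Pc_one b n
  | succ μ hμ ih =>
    obtain ⟨ihs, ihv⟩ := ih
    have hnb : Summable fun x => ‖b x‖ := by
      simpa [Real.norm_eq_abs, abs_of_nonneg, fun n => abs_of_nonneg (hb n)] using hsum
    have hnP : Summable fun x => ‖Pc b μ x‖ := by
      have := ihs
      simpa [Real.norm_eq_abs, fun n => abs_of_nonneg (Pc_nonneg hb μ hμ n)] using this
    have key : ((∑' n, b n) * ∑' n, Pc b μ n)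
        = ∑' n, ∑ kl ∈ Finset.HasAntidiagonal.antidiagonal n, b kl.1 * Pc b μ kl.2 :=
      tsum_mul_tsum_eq_tsum_sum_antidiagonal_of_summable_norm hnb hnP
    have hcongr : ∀ n, (∑ kl ∈ Finset.HasAntidiagonal.antidiagonal n, b kl.1 * Pc b μ kl.2)
        = Pc b (μ+1) n := by
      intro n
      rw [Pc_succ, Finset.Nat.sum_antidiagonal_eq_sum_range_succ_mk]
    have hsummable : Summable (Pc b (μ+1)) := by
      have := summable_sum_mul_antidiagonal_of_summable_norm' hnb hsum hnP ihs
      exact this.congr hcongr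
    refine ⟨hsummable, ?_⟩
    rw [pow_succ']
    rw [← ihv, key]
    exact (tsum_congr fun n => (hcongr n).symm)

/-- Splitting a sum over `range (n+1)` into head, middle, and reflected tail. -/
lemma sum_split (F : ℕ → ℝ) {n K J : ℕ} (h : K + J ≤ n + 1) :
    ∑ i ∈ range (n+1), F i
      = (∑ i ∈ range K, F i) + (∑ i ∈ Ico K (n+1-J), F i) + ∑ j ∈ range J, F (n - j) := by
  have h1 : K ≤ n + 1 - J := by omega
  have h2 : n + 1 - J ≤ n + 1 := by omega
  have e1 : ∑ i ∈ range (n+1), F i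
      = (∑ i ∈ range K, F i) + ∑ i ∈ Ico K (n+1), F i := by
    rw [Finset.range_eq_Ico, ← Finset.sum_Ico_consecutive F (Nat.zero_le K) (by omega), Finset.range_eq_Ico]
  have e2 : ∑ i ∈ Ico K (n+1), F i
      = (∑ i ∈ Ico K (n+1-J), F i) + ∑ i ∈ Ico (n+1-J) (n+1), F i := by
    rw [Finset.sum_Ico_consecutive F h1 h2]
  have e3 : ∑ i ∈ Ico (n+1-J) (n+1), F i = ∑ j ∈ range J, F (n - j) := by
    apply Finset.sum_nbij' (fun i => n - i) (fun j => n - j)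
    · intro i hi
      simp only [Finset.mem_Ico] at hi
      simp only [Finset.mem_range]
      omega
    · intro j hj
      simp only [Finset.mem_range] at hj
      simp only [Finset.mem_Ico]
      omega
    · intro i hi
      simp only [Finset.mem_Ico] at hi
      omega
    · intro j hj
      simp only [Finset.mem_range] at hj
      omega
    · intro i hi
      simp only [Finset.mem_Ico] at hi
      congr 1
      omega
  rw [e1, e2, e3, add_assoc]

section
variable {d : ℕ} {b : ℕ → ℝ}

lemma Hyp.posEv (H : Hyp d b) : ∀ᶠ m in atTop, 0 < b (d*m) := by
  obtain ⟨N, hN⟩ := H.pos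
  filter_upwards [eventually_ge_atTop N] with m hm
  exact hN _ (le_trans hm (Nat.le_mul_of_pos_left m (by have := H.hd; omega))) ⟨m, rfl⟩

lemma nform (hd : 1 ≤ d) {p : ℕ → Prop} (h : ∀ᶠ m in atTop, p (d*m)) :
    ∃ N, ∀ n, N ≤ n → d ∣ n → p n := by
  obtain ⟨M, hM⟩ := eventually_atTop.1 h
  refine ⟨d*M, fun n hn hdn => ?_⟩
  obtain ⟨m, rfl⟩ := hdn
  exact hM m (Nat.le_of_mul_le_mul_left hn (by omega))

lemma ratio_fixed (H : Hyp d b) (t : ℕ) :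
    Tendsto (fun m => b (d*m) / b (d*(m+t))) atTop (nhds 1) := by
  induction t with
  | zero =>
    refine Tendsto.congr' ?_ (tendsto_const_nhds : Tendsto (fun _ : ℕ => (1:ℝ)) atTop (nhds 1))
    filter_upwards [H.posEv] with m hm
    simp [div_self (ne_of_gt hm)]
  | succ t ih =>
    have h1 : Tendsto (fun m => b (d*(m+t)) / b (d*((m+t)+1))) atTop (nhds 1) :=
      H.ratio.comp (tendsto_add_atTop_nat t)
    have h2 := ih.mul h1
    rw [mul_one] at h2
    apply Tendsto.congr' _ h2
    filter_upwards [(tendsto_add_atTop_nat t).eventually H.posEv] with m hm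
    have hne : b (d*(m+t)) ≠ 0 := ne_of_gt hm
    have : d*(m+(t+1)) = d*((m+t)+1) := by ring
    rw [this]
    field_simp

lemma ratio_sub (H : Hyp d b) {j : ℕ} (hj : d ∣ j) :
    Tendsto (fun m => b (d*m - j) / b (d*m)) atTop (nhds 1) := by
  obtain ⟨t, rfl⟩ := hj
  have h1 := (ratio_fixed H t).comp (tendsto_sub_atTop_nat t)
  apply Tendsto.congr' _ h1
  filter_upwards [eventually_ge_atTop t] with m hm
  simp only [Function.comp_apply]
  rw [Nat.sub_add_cancel hm, Nat.mul_sub]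

lemma low_ratio (H : Hyp d b) (K : ℕ) :
    Tendsto (fun m => (∑ j ∈ range K, b j * b (d*m - j)) / b (d*m)) atTop
      (nhds (∑ j ∈ range K, b j)) := by
  have : ∀ j ∈ range K, Tendsto (fun m => b j * b (d*m - j) / b (d*m)) atTop (nhds (b j)) := by
    intro j _
    by_cases hdj : d ∣ j
    · have := (ratio_sub H hdj).const_mul (b j)
      rw [mul_one] at this
      exact this.congr fun m => by rw [mul_div_assoc]
    · simp only [H.supp j hdj, zero_mul, zero_div]
      exact tendsto_const_nhds
  have := tendsto_finset_sum (range K) this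
  exact this.congr fun m => by rw [Finset.sum_div]

lemma mid_small (H : Hyp d b) {ε : ℝ} (hε : 0 < ε) :
    ∃ K N₁, 0 < K ∧ 2*K ≤ N₁ ∧ ∀ n, N₁ ≤ n → d ∣ n →
      ∑ i ∈ Ico K (n+1-K), b i * b (n - i) ≤ ε * b n := by
  have hB := H.hsum.hasSum.tendsto_sum_nat
  have hev : ∀ᶠ K in atTop, 2*((∑' n, b n) - ∑ j ∈ range K, b j) < ε/2 := by
    have : Tendsto (fun K => 2*((∑' n, b n) - ∑ j ∈ range K, b j)) atTop (nhds 0) := by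
      have := hB.const_sub (∑' n, b n)
      simpa using this.const_mul 2
    exact this.eventually_lt_const (by positivity)
  obtain ⟨K, hK1, hKs⟩ : ∃ K, 0 < K ∧ 2*((∑' n, b n) - ∑ j ∈ range K, b j) < ε/2 := by
    obtain ⟨K, hK⟩ := (hev.and (eventually_gt_atTop 0)).exists
    exact ⟨K, hK.2, hK.1⟩
  -- the reflected-tail sum has the same limit
  have hhi : Tendsto (fun m => (∑ j ∈ range K, b (d*m - j) * b (d*m - (d*m - j))) / b (d*m))
      atTop (nhds (∑ j ∈ range K, b j)) := by
    apply Tendsto.congr' _ (low_ratio H K)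
    filter_upwards [eventually_ge_atTop K] with m hm
    congr 1
    apply Finset.sum_congr rfl
    intro j hj
    have hjK : j < K := Finset.mem_range.mp hj
    have hjn : j ≤ d*m := le_trans (le_of_lt hjK) (le_trans hm (Nat.le_mul_of_pos_left m (by have := H.hd; omega)))
    rw [Nat.sub_sub_self hjn, mul_comm]
  have key : Tendsto (fun m => (∑ i ∈ Ico K (d*m+1-K), b i * b (d*m - i)) / b (d*m)) atTop
      (nhds (2*(∑' n, b n) - (∑ j ∈ range K, b j) - (∑ j ∈ range K, b j))) := by
    have h3 := (H.conv.sub (low_ratio H K)).sub hhi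
    apply Tendsto.congr' _ h3
    filter_upwards [eventually_ge_atTop (2*K)] with m hm
    have hsplit : ∑ i ∈ range (d*m+1), b i * b (d*m - i)
        = (∑ i ∈ range K, b i * b (d*m - i)) + (∑ i ∈ Ico K (d*m+1-K), b i * b (d*m - i))
          + ∑ j ∈ range K, b (d*m - j) * b (d*m - (d*m - j)) :=
      sum_split (fun i => b i * b (d*m - i)) (n := d*m) (K := K) (J := K)
        (by have := H.hd; nlinarith [Nat.le_mul_of_pos_left m (show 0 < d by omega)])
    rw [← sub_div, ← sub_div, hsplit]
    ring_nf
  have hlt : ∀ᶠ m in atTop,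
      (∑ i ∈ Ico K (d*m+1-K), b i * b (d*m - i)) / b (d*m) < ε := by
    apply key.eventually_lt_const
    linarith
  have hfin : ∀ᶠ m in atTop, ∑ i ∈ Ico K (d*m+1-K), b i * b (d*m - i) ≤ ε * b (d*m) := by
    filter_upwards [hlt, H.posEv] with m h1 h2
    exact le_of_lt ((div_lt_iff₀ h2).mp h1)
  obtain ⟨N₁', hN₁'⟩ := nform (p := fun n => ∑ i ∈ Ico K (n+1-K), b i * b (n - i) ≤ ε * b n) H.hd hfin
  exact ⟨K, max N₁' (2*K), hK1, le_max_right _ _,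
    fun n hn hdn => hN₁' n (le_trans (le_max_left _ _) hn) hdn⟩

set_option maxHeartbeats 1000000 in
lemma kesten (H : Hyp d b) :
    ∃ C β S₁, 1 ≤ C ∧ 0 ≤ β ∧ β < 1 ∧ (∑' n, b n) ≤ β ∧ 1 ≤ S₁ ∧
      (∀ n, S₁ ≤ n → d ∣ n → 0 < b n) ∧
      ∀ μ, 1 ≤ μ → ∀ n, S₁ ≤ n → Pc b μ n ≤ C * (μ:ℝ) * β^(μ-1) * b n := by
  classical
  set B := ∑' n, b n with hBdef
  have hB0 : 0 ≤ B := tsum_nonneg H.nonneg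
  have hB1 : B < 1 := H.lt_one
  set ε : ℝ := (1-B)/(2*(B+1)) with hεdef
  have hε : 0 < ε := by
    apply div_pos <;> nlinarith
  set β : ℝ := (1+B)/2 with hβdef
  have hβ0 : 0 ≤ β := by positivity
  have hβ1 : β < 1 := by rw [hβdef]; nlinarith
  have hBβ : B ≤ β := by rw [hβdef]; nlinarith
  have hγ : (1+ε)*B + ε ≤ β := by
    have h1 : ε*(B+1) = (1-B)/2 := by
      rw [hεdef]; field_simp
    nlinarith
  obtain ⟨K, N₁, hK0, hKN, hL2⟩ := mid_small H hε
  obtain ⟨Np, hNp⟩ := H.pos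
  set S₁ := max N₁ (max Np (K+1)) with hS₁def
  have hS₁N₁ : N₁ ≤ S₁ := le_max_left _ _
  have hS₁Np : Np ≤ S₁ := le_trans (le_max_left _ _) (le_max_right _ _)
  have hS₁K : K + 1 ≤ S₁ := le_trans (le_max_right _ _) (le_max_right _ _)
  have hS₁pos : ∀ n, S₁ ≤ n → d ∣ n → 0 < b n := fun n hn => hNp n (le_trans hS₁Np hn)
  -- threshold N₂ : neighbours within factor (1+ε)
  have hN₂ev : ∀ᶠ m in atTop, ∀ i ∈ range (K+1), b (d*m - i) ≤ (1+ε) * b (d*m) := by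
    rw [eventually_all_finset]
    intro i hi
    by_cases hdi : d ∣ i
    · have h1 := (ratio_sub H hdi).eventually_lt_const (show (1:ℝ) < 1+ε by linarith)
      filter_upwards [h1, H.posEv] with m hm hpos
      exact le_of_lt ((div_lt_iff₀ hpos).mp hm)
    · filter_upwards [eventually_ge_atTop (K+1), H.posEv] with m hm hpos
      have him : i ≤ d*m := by
        have : i ≤ K := by simpa using Nat.lt_succ_iff.mp (Finset.mem_range.mp hi)
        have : m ≤ d*m := Nat.le_mul_of_pos_left m (by have := H.hd; omega)
        omega
      have : ¬ d ∣ (d*m - i) := by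
        intro hdd
        exact hdi (by
          have : d ∣ (d*m - (d*m - i)) := Nat.dvd_sub (Dvd.intro m rfl) hdd
          rwa [Nat.sub_sub_self him] at this)
      rw [H.supp _ this]
      positivity
  obtain ⟨N₂, hN₂⟩ := nform (p := fun n => ∀ i ∈ range (K+1), b (n - i) ≤ (1+ε) * b n)
    H.hd hN₂ev
  -- threshold N₃ : small shifts within factor 2
  have hN₃ev : ∀ᶠ m in atTop, ∀ i ∈ range (S₁+1), b (d*m - i) ≤ 2 * b (d*m) := by
    rw [eventually_all_finset]
    intro i hi
    by_cases hdi : d ∣ i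
    · have h1 := (ratio_sub H hdi).eventually_lt_const (show (1:ℝ) < 2 by norm_num)
      filter_upwards [h1, H.posEv] with m hm hpos
      exact le_of_lt ((div_lt_iff₀ hpos).mp hm)
    · filter_upwards [eventually_ge_atTop (S₁+1), H.posEv] with m hm hpos
      have him : i ≤ d*m := by
        have : i ≤ S₁ := by simpa using Nat.lt_succ_iff.mp (Finset.mem_range.mp hi)
        have : m ≤ d*m := Nat.le_mul_of_pos_left m (by have := H.hd; omega)
        omega
      have : ¬ d ∣ (d*m - i) := by
        intro hdd
        exact hdi (by
          have : d ∣ (d*m - (d*m - i)) := Nat.dvd_sub (Dvd.intro m rfl) hdd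
          rwa [Nat.sub_sub_self him] at this)
      rw [H.supp _ this]
      positivity
  obtain ⟨N₃, hN₃⟩ := nform (p := fun n => ∀ i ∈ range (S₁+1), b (n - i) ≤ 2 * b n)
    H.hd hN₃ev
  set S₀ := max (S₁ + K) (max N₂ N₃) with hS₀def
  have hS₀1 : S₁ + K ≤ S₀ := le_max_left _ _
  have hS₀2 : N₂ ≤ S₀ := le_trans (le_max_left _ _) (le_max_right _ _)
  have hS₀3 : N₃ ≤ S₀ := le_trans (le_max_right _ _) (le_max_right _ _)
  -- lower bound on the finitely many intermediate values
  obtain ⟨c₀, hc₀pos, hc₀⟩ : ∃ c₀ : ℝ, 0 < c₀ ∧ ∀ n, S₁ ≤ n → n < S₀ → d ∣ n → c₀ ≤ b n := by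
    by_cases hne : ((Finset.Ico S₁ S₀).filter (fun n => d ∣ n)).Nonempty
    · obtain ⟨n₀, hn₀, hmin⟩ := Finset.exists_min_image _ b hne
      obtain ⟨h1, h2⟩ := Finset.mem_filter.mp hn₀
      refine ⟨b n₀, hS₁pos _ (Finset.mem_Ico.mp h1).1 h2, ?_⟩
      intro n hn1 hn2 hdn
      exact hmin n (Finset.mem_filter.mpr ⟨Finset.mem_Ico.mpr ⟨hn1, hn2⟩, hdn⟩)
    · exact ⟨1, one_pos, fun n hn1 hn2 hdn =>
        absurd ⟨n, Finset.mem_filter.mpr ⟨Finset.mem_Ico.mpr ⟨hn1, hn2⟩, hdn⟩⟩ hne⟩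
  set C : ℝ := max 1 (max (1/c₀) (2*(S₁:ℝ))) with hCdef
  have hC1 : 1 ≤ C := le_max_left _ _
  have hC2 : 1/c₀ ≤ C := le_trans (le_max_left _ _) (le_max_right _ _)
  have hC3 : 2*(S₁:ℝ) ≤ C := le_trans (le_max_right _ _) (le_max_right _ _)
  have hC0 : 0 < C := lt_of_lt_of_le one_pos hC1
  refine ⟨C, β, S₁, hC1, hβ0, hβ1, hBβ, by omega, hS₁pos, ?_⟩
  intro μ hμ
  induction μ, hμ using Nat.le_induction with
  | base =>
    intro n hn
    rw [Pc_one]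
    calc b n ≤ C * b n := by nlinarith [H.nonneg n]
      _ = C * ((1:ℕ):ℝ) * β^(1-1) * b n := by norm_num
  | succ μ hμ ih =>
    intro n hn
    by_cases hdn : d ∣ n
    · by_cases hnS₀ : n < S₀
      · -- small case: use crude bound and the lower bound c₀
        have h1 : Pc b (μ+1) n ≤ B^(μ+1) := Pc_le H.nonneg H.hsum (μ+1) (by omega) n
        have h2 : c₀ ≤ b n := hc₀ n hn hnS₀ hdn
        have h3 : B^(μ+1) ≤ β^μ := by
          calc B^(μ+1) ≤ β^(μ+1) := pow_le_pow_left₀ hB0 hBβ (μ+1)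
            _ ≤ β^μ := pow_le_pow_of_le_one hβ0 (le_of_lt hβ1) (by omega)
        have key : 1 ≤ C * ((μ:ℝ)+1) * b n := by
          have h5 : 1/c₀ * c₀ = 1 := by field_simp
          have h6 : 1/c₀ * c₀ ≤ C * b n :=
            mul_le_mul hC2 h2 (le_of_lt hc₀pos) (le_of_lt hC0)
          have h7 : (1:ℝ) ≤ (μ:ℝ)+1 := by
            have : (0:ℝ) ≤ (μ:ℝ) := Nat.cast_nonneg μ
            linarith
          nlinarith
        calc Pc b (μ+1) n ≤ β^μ := le_trans h1 h3
          _ = β^μ * 1 := (mul_one _).symm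
          _ ≤ β^μ * (C * ((μ:ℝ)+1) * b n) := mul_le_mul_of_nonneg_left key (pow_nonneg hβ0 μ)
          _ = C * ((μ:ℝ)+1) * β^μ * b n := by ring
          _ = C * ((μ+1:ℕ):ℝ) * β^((μ+1)-1) * b n := by push_cast; ring_nf
      · push_neg at hnS₀
        have hnK : K + S₁ ≤ n + 1 := by omega
        have hsplit : ∑ i ∈ range (n+1), b i * Pc b μ (n - i)
            = (∑ i ∈ range K, b i * Pc b μ (n - i))
              + (∑ i ∈ Ico K (n+1-S₁), b i * Pc b μ (n - i))
              + ∑ j ∈ range S₁, b (n - j) * Pc b μ (n - (n - j)) :=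
          sum_split (fun i => b i * Pc b μ (n - i)) hnK
        set cμ : ℝ := C * (μ:ℝ) * β^(μ-1) with hcμdef
        have hcμ0 : 0 ≤ cμ := by
          have : (0:ℝ) ≤ (μ:ℝ) := Nat.cast_nonneg μ
          positivity
        have hbn0 : 0 ≤ b n := H.nonneg n
        have hlo : ∑ i ∈ range K, b i * Pc b μ (n - i) ≤ B * (cμ * ((1+ε) * b n)) := by
          calc ∑ i ∈ range K, b i * Pc b μ (n - i)
              ≤ ∑ i ∈ range K, b i * (cμ * ((1+ε) * b n)) := by
                apply Finset.sum_le_sum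
                intro i hi
                have hiK : i < K := Finset.mem_range.mp hi
                apply mul_le_mul_of_nonneg_left _ (H.nonneg i)
                have hni : S₁ ≤ n - i := by omega
                calc Pc b μ (n - i) ≤ cμ * b (n - i) := ih _ hni
                  _ ≤ cμ * ((1+ε) * b n) := by
                      apply mul_le_mul_of_nonneg_left _ hcμ0
                      have := hN₂ n (le_trans hS₀2 hnS₀) hdn i (Finset.mem_range.mpr (by omega))
                      linarith
            _ = (∑ i ∈ range K, b i) * (cμ * ((1+ε) * b n)) := by rw [← Finset.sum_mul]
            _ ≤ B * (cμ * ((1+ε) * b n)) := by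
                apply mul_le_mul_of_nonneg_right (Summable.sum_le_tsum _ (fun k _ => H.nonneg k) H.hsum)
                positivity
        have hmid : ∑ i ∈ Ico K (n+1-S₁), b i * Pc b μ (n - i) ≤ cμ * (ε * b n) := by
          calc ∑ i ∈ Ico K (n+1-S₁), b i * Pc b μ (n - i)
              ≤ ∑ i ∈ Ico K (n+1-S₁), cμ * (b i * b (n - i)) := by
                apply Finset.sum_le_sum
                intro i hi
                obtain ⟨hi1, hi2⟩ := Finset.mem_Ico.mp hi
                have hni : S₁ ≤ n - i := by omega
                have := ih (n - i) hni
                calc b i * Pc b μ (n - i) ≤ b i * (cμ * b (n - i)) :=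
                      mul_le_mul_of_nonneg_left (ih _ hni) (H.nonneg i)
                  _ = cμ * (b i * b (n - i)) := by ring
            _ = cμ * ∑ i ∈ Ico K (n+1-S₁), b i * b (n - i) := by rw [Finset.mul_sum]
            _ ≤ cμ * ∑ i ∈ Ico K (n+1-K), b i * b (n - i) := by
                apply mul_le_mul_of_nonneg_left _ hcμ0
                apply Finset.sum_le_sum_of_subset_of_nonneg
                · apply Finset.Ico_subset_Ico le_rfl
                  omega
                · intro i _ _
                  exact mul_nonneg (H.nonneg i) (H.nonneg (n-i))
            _ ≤ cμ * (ε * b n) := by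
                apply mul_le_mul_of_nonneg_left _ hcμ0
                exact hL2 n (by omega) hdn
        have hhi : ∑ j ∈ range S₁, b (n - j) * Pc b μ (n - (n - j)) ≤ (S₁:ℝ) * (2 * b n * B^μ) := by
          have hrw : ∀ j ∈ range S₁, b (n - j) * Pc b μ (n - (n - j)) = b (n - j) * Pc b μ j := by
            intro j hj
            have : j < S₁ := Finset.mem_range.mp hj
            congr 2
            omega
          rw [Finset.sum_congr rfl hrw]
          calc ∑ j ∈ range S₁, b (n - j) * Pc b μ j
              ≤ ∑ _j ∈ range S₁, 2 * b n * B^μ := by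
                apply Finset.sum_le_sum
                intro j hj
                have hjS : j < S₁ := Finset.mem_range.mp hj
                by_cases hdj : d ∣ j
                · have hp1 : Pc b μ j ≤ B^μ := Pc_le H.nonneg H.hsum μ hμ j
                  have hp2 : b (n - j) ≤ 2 * b n :=
                    hN₃ n (le_trans hS₀3 hnS₀) hdn j (Finset.mem_range.mpr (by omega))
                  have := H.nonneg (n - j)
                  have := Pc_nonneg H.nonneg μ hμ j
                  nlinarith
                · rw [Pc_supp H.supp μ hμ j hdj, mul_zero]
                  positivity
            _ = (S₁:ℝ) * (2 * b n * B^μ) := by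
                rw [Finset.sum_const, Finset.card_range, nsmul_eq_mul]
        have hBμβ : B^μ ≤ β^μ := pow_le_pow_left₀ hB0 hBβ μ
        have hβμ : β^(μ-1) * β = β^μ := by
          rw [← pow_succ]
          congr 1
          omega
        have hstep : cμ * ((1+ε)*B + ε) ≤ C * (μ:ℝ) * β^μ := by
          rw [hcμdef]
          calc C * (μ:ℝ) * β^(μ-1) * ((1+ε)*B + ε) ≤ C * (μ:ℝ) * β^(μ-1) * β := by
                apply mul_le_mul_of_nonneg_left hγ
                have : (0:ℝ) ≤ (μ:ℝ) := Nat.cast_nonneg μ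
                positivity
            _ = C * (μ:ℝ) * β^μ := by rw [mul_assoc, hβμ]
        have htail : (S₁:ℝ) * (2 * b n * B^μ) ≤ C * β^μ * b n := by
          calc (S₁:ℝ) * (2 * b n * B^μ) = (2*(S₁:ℝ)) * B^μ * b n := by ring
            _ ≤ C * B^μ * b n := by
                apply mul_le_mul_of_nonneg_right _ hbn0
                exact mul_le_mul_of_nonneg_right hC3 (pow_nonneg hB0 μ)
            _ ≤ C * β^μ * b n := by
                apply mul_le_mul_of_nonneg_right _ hbn0
                exact mul_le_mul_of_nonneg_left hBμβ (le_of_lt hC0)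
        calc Pc b (μ+1) n = ∑ i ∈ range (n+1), b i * Pc b μ (n - i) := Pc_succ b μ n
          _ = _ + _ + _ := hsplit
          _ ≤ B * (cμ * ((1+ε) * b n)) + cμ * (ε * b n) + (S₁:ℝ) * (2 * b n * B^μ) := by
              gcongr
          _ = cμ * ((1+ε)*B + ε) * b n + (S₁:ℝ) * (2 * b n * B^μ) := by ring
          _ ≤ C * (μ:ℝ) * β^μ * b n + C * β^μ * b n :=
              add_le_add (mul_le_mul_of_nonneg_right hstep hbn0) htail
          _ = C * ((μ:ℝ)+1) * β^μ * b n := by ring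
          _ = C * ((μ+1:ℕ):ℝ) * β^((μ+1)-1) * b n := by push_cast; ring_nf
    · rw [Pc_supp H.supp (μ+1) (by omega) n hdn]
      have : (0:ℝ) ≤ (μ:ℝ)+1 := by positivity
      have := H.nonneg n
      have : (0:ℝ) ≤ ((μ+1:ℕ):ℝ) := Nat.cast_nonneg _
      positivity

lemma shift_ratio (H : Hyp d b) {h : ℕ → ℝ} {c : ℝ}
    (hrat : Tendsto (fun m => h (d*m) / b (d*m)) atTop (nhds c)) {i : ℕ} (hdi : d ∣ i) :
    Tendsto (fun m => h (d*m - i) / b (d*m - i)) atTop (nhds c) := by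
  obtain ⟨t, rfl⟩ := hdi
  have h1 := hrat.comp (tendsto_sub_atTop_nat t)
  apply Tendsto.congr' _ h1
  filter_upwards [eventually_ge_atTop t] with m hm
  simp only [Function.comp_apply]
  rw [Nat.mul_sub]

lemma cross_ratio (H : Hyp d b) (h : ℕ → ℝ) (c : ℝ)
    (hrat : Tendsto (fun m => h (d*m) / b (d*m)) atTop (nhds c)) (M : ℕ) :
    Tendsto (fun m => (∑ i ∈ range M, b i * h (d*m - i)) / b (d*m)) atTop
      (nhds ((∑ i ∈ range M, b i) * c)) := by
  have key : ∀ i ∈ range M,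
      Tendsto (fun m => b i * h (d*m - i) / b (d*m)) atTop (nhds (b i * c)) := by
    intro i _
    by_cases hdi : d ∣ i
    · have t1 : Tendsto (fun m => h (d*m - i) / b (d*m - i)) atTop (nhds c) :=
        shift_ratio H hrat hdi
      have t2 := ratio_sub H hdi
      have t3 := (t1.mul t2).const_mul (b i)
      rw [mul_one] at t3
      apply Tendsto.congr' _ t3
      have hposI : ∀ᶠ m in atTop, 0 < b (d*m - i) := by
        obtain ⟨t, rfl⟩ := hdi
        have h1 := (tendsto_sub_atTop_nat t).eventually H.posEv
        filter_upwards [h1, eventually_ge_atTop t] with m hm1 hm2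
        rwa [Nat.mul_sub] at hm1
      filter_upwards [hposI] with m hm
      have hne : b (d*m - i) ≠ 0 := ne_of_gt hm
      rw [div_mul_div_cancel₀ hne, mul_div_assoc]
    · simp only [H.supp i hdi, zero_mul, zero_div]
      exact tendsto_const_nhds
  have h2 := tendsto_finset_sum (range M) key
  rw [Finset.sum_mul]
  exact h2.congr fun m => by rw [Finset.sum_div]

lemma refl_ratio (H : Hyp d b) (h : ℕ → ℝ) (hhsupp : ∀ n, ¬ d ∣ n → h n = 0) (M : ℕ) :
    Tendsto (fun m => (∑ j ∈ range M, b (d*m - j) * h j) / b (d*m)) atTop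
      (nhds (∑ j ∈ range M, h j)) := by
  have key : ∀ j ∈ range M,
      Tendsto (fun m => b (d*m - j) * h j / b (d*m)) atTop (nhds (h j)) := by
    intro j _
    by_cases hdj : d ∣ j
    · have := (ratio_sub H hdj).mul_const (h j)
      rw [one_mul] at this
      exact this.congr fun m => by rw [div_mul_eq_mul_div]
    · simp only [hhsupp j hdj, mul_zero, zero_div]
      exact tendsto_const_nhds
  have h2 := tendsto_finset_sum (range M) key
  exact h2.congr fun m => by rw [Finset.sum_div]

lemma conv_ratio (H : Hyp d b) (h : ℕ → ℝ) (hh0 : ∀ n, 0 ≤ h n)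
    (hhsupp : ∀ n, ¬ d ∣ n → h n = 0) (hhsum : Summable h) (c T : ℝ) (hT0 : 0 ≤ T)
    (S₂ : ℕ) (hrat : Tendsto (fun m => h (d*m) / b (d*m)) atTop (nhds c))
    (hbdd : ∀ n, S₂ ≤ n → h n ≤ T * b n) :
    Tendsto (fun m => (∑ i ∈ range (d*m+1), b i * h (d*m - i)) / b (d*m)) atTop
      (nhds ((∑' n, b n) * c + ∑' n, h n)) := by
  rw [Metric.tendsto_atTop]
  intro ε hε
  have hε4 : 0 < ε/(4*(T+1)) := by positivity
  obtain ⟨K, N₁, hK0, hKN, hL2⟩ := mid_small H hε4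
  set L : ℝ := (∑' n, b n) * c + ∑' n, h n with hLdef
  have hΛ : Tendsto (fun M => (∑ i ∈ range M, b i) * c + ∑ j ∈ range M, h j)
      atTop (nhds L) :=
    (H.hsum.hasSum.tendsto_sum_nat.mul_const c).add hhsum.hasSum.tendsto_sum_nat
  obtain ⟨M, hMK, hMS₂, hMdist⟩ : ∃ M, K ≤ M ∧ S₂ ≤ M ∧
      dist ((∑ i ∈ range M, b i) * c + ∑ j ∈ range M, h j) L < ε/3 := by
    obtain ⟨M₀, hM₀⟩ := Metric.tendsto_atTop.1 hΛ (ε/3) (by positivity)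
    exact ⟨max M₀ (max K S₂), le_trans (le_max_left _ _) (le_max_right _ _),
      le_trans (le_max_right _ _) (le_max_right _ _), hM₀ _ (le_max_left _ _)⟩
  have hAB := (cross_ratio H h c hrat M).add (refl_ratio H h hhsupp M)
  obtain ⟨N₂, hN₂⟩ := Metric.tendsto_atTop.1 hAB (ε/3) (by positivity)
  obtain ⟨N₃, hN₃⟩ := eventually_atTop.1 H.posEv
  refine ⟨max N₂ (max N₃ (2*M + N₁ + S₂)), fun m hm => ?_⟩
  have hm₂ : N₂ ≤ m := le_trans (le_max_left _ _) hm
  have hm₃ : N₃ ≤ m := le_trans (le_trans (le_max_left _ _) (le_max_right _ _)) hm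
  have hmM : 2*M + N₁ + S₂ ≤ m := le_trans (le_trans (le_max_right _ _) (le_max_right _ _)) hm
  have hdm : m ≤ d*m := Nat.le_mul_of_pos_left m (by have := H.hd; omega)
  have hbpos : 0 < b (d*m) := hN₃ m hm₃
  set n := d*m with hn
  have hdvdn : d ∣ n := ⟨m, hn⟩
  have hsplit : ∑ i ∈ range (n+1), b i * h (n - i)
      = (∑ i ∈ range M, b i * h (n - i)) + (∑ i ∈ Ico M (n+1-M), b i * h (n - i))
        + ∑ j ∈ range M, b (n - j) * h (n - (n - j)) :=
    sum_split (fun i => b i * h (n - i)) (by omega)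
  have hrefl : ∑ j ∈ range M, b (n - j) * h (n - (n - j))
      = ∑ j ∈ range M, b (n - j) * h j := by
    apply Finset.sum_congr rfl
    intro j hj
    have : j < M := Finset.mem_range.mp hj
    congr 2
    omega
  have hmid0 : 0 ≤ ∑ i ∈ Ico M (n+1-M), b i * h (n - i) :=
    Finset.sum_nonneg fun i _ => mul_nonneg (H.nonneg i) (hh0 _)
  have hmidle : ∑ i ∈ Ico M (n+1-M), b i * h (n - i) ≤ T * (ε/(4*(T+1)) * b n) := by
    calc ∑ i ∈ Ico M (n+1-M), b i * h (n - i)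
        ≤ ∑ i ∈ Ico M (n+1-M), T * (b i * b (n - i)) := by
          apply Finset.sum_le_sum
          intro i hi
          obtain ⟨hi1, hi2⟩ := Finset.mem_Ico.mp hi
          have hS₂ : S₂ ≤ n - i := by omega
          calc b i * h (n - i) ≤ b i * (T * b (n - i)) :=
                mul_le_mul_of_nonneg_left (hbdd _ hS₂) (H.nonneg i)
            _ = T * (b i * b (n - i)) := by ring
      _ = T * ∑ i ∈ Ico M (n+1-M), b i * b (n - i) := by rw [Finset.mul_sum]
      _ ≤ T * ∑ i ∈ Ico K (n+1-K), b i * b (n - i) := by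
          apply mul_le_mul_of_nonneg_left _ hT0
          apply Finset.sum_le_sum_of_subset_of_nonneg
          · exact Finset.Ico_subset_Ico hMK (by omega)
          · intro i _ _
            exact mul_nonneg (H.nonneg i) (H.nonneg _)
      _ ≤ T * (ε/(4*(T+1)) * b n) := by
          apply mul_le_mul_of_nonneg_left _ hT0
          exact hL2 n (by omega) hdvdn
  have hfrac : T * (ε/(4*(T+1))) ≤ ε/4 := by
    rw [mul_div_assoc']
    rw [div_le_iff₀ (by positivity : (0:ℝ) < 4*(T+1))]
    nlinarith
  have hmiddiv : (∑ i ∈ Ico M (n+1-M), b i * h (n - i)) / b n ≤ ε/4 := by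
    rw [div_le_iff₀ hbpos]
    calc (∑ i ∈ Ico M (n+1-M), b i * h (n - i)) ≤ T * (ε/(4*(T+1)) * b n) := hmidle
      _ = (T * (ε/(4*(T+1)))) * b n := by ring
      _ ≤ ε/4 * b n := mul_le_mul_of_nonneg_right hfrac (le_of_lt hbpos)
  have hABm := hN₂ m hm₂
  rw [Real.dist_eq] at hABm hMdist ⊢
  have hdecomp : (∑ i ∈ range (n+1), b i * h (n - i)) / b n
      = ((∑ i ∈ range M, b i * h (n - i)) / b n + (∑ j ∈ range M, b (n - j) * h j) / b n)
        + (∑ i ∈ Ico M (n+1-M), b i * h (n - i)) / b n := by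
    rw [hsplit, hrefl]
    ring
  rw [hdecomp]
  set x := (∑ i ∈ range M, b i * h (n - i)) / b n
    + (∑ j ∈ range M, b (n - j) * h j) / b n with hxdef
  set y := (∑ i ∈ Ico M (n+1-M), b i * h (n - i)) / b n with hydef
  set Λ := (∑ i ∈ range M, b i) * c + ∑ j ∈ range M, h j with hΛdef
  have htri : |x + y - L| ≤ |x - Λ| + |Λ - L| + |y| := by
    have e : x + y - L = (x - Λ) + (Λ - L) + y := by ring
    rw [e]
    calc |(x - Λ) + (Λ - L) + y| ≤ |(x - Λ) + (Λ - L)| + |y| := abs_add_le _ _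
      _ ≤ |x - Λ| + |Λ - L| + |y| := by
          gcongr
          exact abs_add_le _ _
  have hy : |y| ≤ ε/4 := by
    rw [hydef, abs_of_nonneg (div_nonneg hmid0 (le_of_lt hbpos))]
    exact hmiddiv
  have hx : |x - Λ| < ε/3 := hABm
  linarith

lemma Pc_ratio (H : Hyp d b) : ∀ ν : ℕ,
    Tendsto (fun m => Pc b (ν+1) (d*m) / b (d*m)) atTop
      (nhds (((ν:ℝ)+1) * (∑' n, b n)^ν)) := by
  obtain ⟨C, β, S₁, hC1, hβ0, hβ1, hBβ, hS₁1, hS₁pos, hkes⟩ := kesten H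
  intro ν
  induction ν with
  | zero =>
    have h1 : Tendsto (fun m => b (d*m) / b (d*m)) atTop (nhds 1) := by
      refine Tendsto.congr' ?_ (tendsto_const_nhds : Tendsto (fun _ : ℕ => (1:ℝ)) atTop (nhds 1))
      filter_upwards [H.posEv] with m hm
      simp [div_self (ne_of_gt hm)]
    have h2 : Tendsto (fun m => Pc b 1 (d*m) / b (d*m)) atTop (nhds 1) := by
      apply h1.congr
      intro m
      rw [Pc_one]
    simpa using h2
  | succ ν ih =>
    have hT0 : (0:ℝ) ≤ C * ((ν+1:ℕ):ℝ) * β^ν :=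
      mul_nonneg (mul_nonneg (le_trans zero_le_one hC1) (Nat.cast_nonneg _)) (pow_nonneg hβ0 _)
    have hbdd : ∀ n, S₁ ≤ n → Pc b (ν+1) n ≤ (C * ((ν+1:ℕ):ℝ) * β^ν) * b n := by
      intro n hn
      have := hkes (ν+1) (by omega) n hn
      simpa using this
    have happ := conv_ratio H (Pc b (ν+1)) (Pc_nonneg H.nonneg (ν+1) (by omega))
      (Pc_supp H.supp (ν+1) (by omega)) (Pc_summable H.nonneg H.hsum (ν+1) (by omega)).1
      (((ν:ℝ)+1) * (∑' n, b n)^ν) (C * ((ν+1:ℕ):ℝ) * β^ν) hT0 S₁ ih hbdd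
    rw [(Pc_summable H.nonneg H.hsum (ν+1) (by omega)).2] at happ
    have hval : (∑' n, b n) * (((ν:ℝ)+1) * (∑' n, b n)^ν) + (∑' n, b n)^(ν+1)
        = (((ν+1:ℕ):ℝ)+1) * (∑' n, b n)^(ν+1) := by
      push_cast
      ring
    rw [hval] at happ
    exact happ.congr fun m => by rw [← Pc_succ]

lemma Lb_ratio (H : Hyp d b) :
    Tendsto (fun m => (∑ μ ∈ Icc 1 (d*m), ((μ:ℝ))⁻¹ * Pc b μ (d*m)) / b (d*m)) atTop
      (nhds ((1 - ∑' n, b n)⁻¹)) := by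
  obtain ⟨C, β, S₁, hC1, hβ0, hβ1, hBβ, hS₁1, hS₁pos, hkes⟩ := kesten H
  set B := ∑' n, b n with hBdef
  have hB0 : 0 ≤ B := tsum_nonneg H.nonneg
  have hB1 : B < 1 := H.lt_one
  have hC0 : (0:ℝ) < C := lt_of_lt_of_le one_pos hC1
  rw [Metric.tendsto_atTop]
  intro ε hε
  -- choose the cutoff M
  have htp : Tendsto (fun M : ℕ => C * (β^M * (1-β)⁻¹) + B^M/(1-B)) atTop (nhds 0) := by
    have t1 : Tendsto (fun M : ℕ => β^M) atTop (nhds 0) :=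
      tendsto_pow_atTop_nhds_zero_of_lt_one hβ0 hβ1
    have t2 : Tendsto (fun M : ℕ => B^M) atTop (nhds 0) :=
      tendsto_pow_atTop_nhds_zero_of_lt_one hB0 hB1
    have t3 := ((t1.mul_const ((1-β)⁻¹)).const_mul C).add (t2.div_const (1-B))
    simpa using t3
  obtain ⟨M, hMsmall⟩ := (htp.eventually_lt_const (show (0:ℝ) < ε/2 by positivity)).exists
  -- head sum limit
  have hhead : Tendsto (fun m => ∑ μ ∈ Icc 1 M, (μ:ℝ)⁻¹ * Pc b μ (d*m) / b (d*m)) atTop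
      (nhds (∑ μ ∈ Icc 1 M, B^(μ-1))) := by
    apply tendsto_finset_sum
    intro μ hμ
    have hμ1 : 1 ≤ μ := (Finset.mem_Icc.mp hμ).1
    obtain ⟨ν, rfl⟩ : ∃ ν, μ = ν + 1 := ⟨μ - 1, by omega⟩
    have h1 := (Pc_ratio H ν).const_mul (((ν:ℝ)+1))⁻¹
    have h2 : ((ν:ℝ)+1)⁻¹ * (((ν:ℝ)+1) * B^ν) = B^((ν+1)-1) := by
      have : ((ν:ℝ)+1) ≠ 0 := by positivity
      field_simp
      simp
    rw [h2] at h1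
    apply h1.congr fun m => ?_
    push_cast
    rw [mul_div_assoc]
  obtain ⟨N₂, hN₂⟩ := Metric.tendsto_atTop.1 hhead (ε/3) (by positivity)
  refine ⟨max N₂ (S₁ + M + 1), fun m hm => ?_⟩
  have hm₂ : N₂ ≤ m := le_trans (le_max_left _ _) hm
  have hmM : S₁ + M + 1 ≤ m := le_trans (le_max_right _ _) hm
  have hdm : m ≤ d*m := Nat.le_mul_of_pos_left m (by have := H.hd; omega)
  set n := d*m with hn
  have hdvdn : d ∣ n := ⟨m, hn⟩
  have hbpos : 0 < b n := hS₁pos n (by omega) hdvdn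
  -- split the sum
  have hsplit : ∑ μ ∈ Icc 1 n, (μ:ℝ)⁻¹ * Pc b μ n
      = (∑ μ ∈ Icc 1 M, (μ:ℝ)⁻¹ * Pc b μ n) + ∑ μ ∈ Ico (M+1) (n+1), (μ:ℝ)⁻¹ * Pc b μ n := by
    have e1 : Icc 1 n = Ico 1 (n+1) := by rw [Finset.Ico_add_one_right_eq_Icc]
    have e2 : Icc 1 M = Ico 1 (M+1) := by rw [Finset.Ico_add_one_right_eq_Icc]
    rw [e1, e2, Finset.sum_Ico_consecutive _ (by omega) (by omega)]
  -- tail bound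
  have htail0 : 0 ≤ ∑ μ ∈ Ico (M+1) (n+1), (μ:ℝ)⁻¹ * Pc b μ n := by
    apply Finset.sum_nonneg
    intro μ hμ
    have hμ1 : 1 ≤ μ := by have := (Finset.mem_Ico.mp hμ).1; omega
    exact mul_nonneg (by positivity) (Pc_nonneg H.nonneg μ hμ1 n)
  have htaille : ∑ μ ∈ Ico (M+1) (n+1), (μ:ℝ)⁻¹ * Pc b μ n
      ≤ C * (β^M * (1-β)⁻¹) * b n := by
    calc ∑ μ ∈ Ico (M+1) (n+1), (μ:ℝ)⁻¹ * Pc b μ n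
        ≤ ∑ μ ∈ Ico (M+1) (n+1), C * β^(μ-1) * b n := by
          apply Finset.sum_le_sum
          intro μ hμ
          have hμ1 : 1 ≤ μ := by have := (Finset.mem_Ico.mp hμ).1; omega
          have hk := hkes μ hμ1 n (by omega)
          have hμpos : (0:ℝ) < (μ:ℝ) := by exact_mod_cast Nat.pos_of_ne_zero (by omega)
          calc (μ:ℝ)⁻¹ * Pc b μ n ≤ (μ:ℝ)⁻¹ * (C * (μ:ℝ) * β^(μ-1) * b n) :=
                mul_le_mul_of_nonneg_left hk (by positivity)
            _ = ((μ:ℝ)⁻¹ * (μ:ℝ)) * (C * β^(μ-1) * b n) := by ring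
            _ = C * β^(μ-1) * b n := by rw [inv_mul_cancel₀ (ne_of_gt hμpos), one_mul]
      _ = (∑ μ ∈ Ico (M+1) (n+1), β^(μ-1)) * (C * b n) := by
          rw [Finset.sum_mul]
          apply Finset.sum_congr rfl
          intro μ _
          ring
      _ ≤ (β^M * (1-β)⁻¹) * (C * b n) := by
          apply mul_le_mul_of_nonneg_right _ (by positivity)
          have e3 : ∑ μ ∈ Ico (M+1) (n+1), β^(μ-1) = ∑ i ∈ range (n+1-(M+1)), β^(M+i) := by
            rw [Finset.sum_Ico_eq_sum_range]
            apply Finset.sum_congr rfl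
            intro i _
            congr 1
            omega
          rw [e3]
          have e4 : ∀ i, β^(M+i) = β^M * β^i := fun i => pow_add β M i
          calc ∑ i ∈ range (n+1-(M+1)), β^(M+i) = β^M * ∑ i ∈ range (n+1-(M+1)), β^i := by
                rw [Finset.mul_sum]
                exact Finset.sum_congr rfl fun i _ => e4 i
            _ ≤ β^M * (1-β)⁻¹ := by
                apply mul_le_mul_of_nonneg_left _ (pow_nonneg hβ0 M)
                calc ∑ i ∈ range (n+1-(M+1)), β^i
                    ≤ ∑' i : ℕ, β^i := Summable.sum_le_tsum _ (fun i _ => pow_nonneg hβ0 i)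
                      (summable_geometric_of_lt_one hβ0 hβ1)
                  _ = (1-β)⁻¹ := tsum_geometric_of_lt_one hβ0 hβ1
      _ = C * (β^M * (1-β)⁻¹) * b n := by ring
  -- geometric head value
  have hheadval : (1-B)⁻¹ - (∑ μ ∈ Icc 1 M, B^(μ-1)) = B^M/(1-B) := by
    have e2 : Icc 1 M = Ico 1 (M+1) := by rw [Finset.Ico_add_one_right_eq_Icc]
    have e5 : ∑ μ ∈ Icc 1 M, B^(μ-1) = ∑ i ∈ range M, B^i := by
      rw [e2, Finset.sum_Ico_eq_sum_range]
      apply Finset.sum_congr (by norm_num)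
      intro i _
      congr 1
      omega
    rw [e5, geom_sum_eq (by intro hc; rw [hc] at hB1; exact lt_irrefl _ hB1) M]
    have hne : (1:ℝ) - B ≠ 0 := by intro hc; nlinarith
    have e7 : (B^M - 1)/(B - 1) = (1 - B^M)/(1-B) := by
      rw [← neg_sub 1 (B^M), ← neg_sub 1 B, neg_div_neg_eq]
    rw [e7, inv_eq_one_div, div_sub_div_same]
    congr 1
    ring
  have hheadval0 : 0 ≤ B^M/(1-B) := by
    apply div_nonneg (pow_nonneg hB0 M)
    linarith
  -- assemble
  have hheadm := hN₂ m hm₂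
  rw [Real.dist_eq] at hheadm ⊢
  have htaildiv : (∑ μ ∈ Ico (M+1) (n+1), (μ:ℝ)⁻¹ * Pc b μ n) / b n ≤ C * (β^M * (1-β)⁻¹) := by
    rw [div_le_iff₀ hbpos]
    exact htaille
  have hdecomp : (∑ μ ∈ Icc 1 n, (μ:ℝ)⁻¹ * Pc b μ n) / b n
      = (∑ μ ∈ Icc 1 M, (μ:ℝ)⁻¹ * Pc b μ n / b n)
        + (∑ μ ∈ Ico (M+1) (n+1), (μ:ℝ)⁻¹ * Pc b μ n) / b n := by
    rw [hsplit, add_div, Finset.sum_div]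
  rw [hdecomp]
  set x := ∑ μ ∈ Icc 1 M, (μ:ℝ)⁻¹ * Pc b μ n / b n with hxdef
  set y := (∑ μ ∈ Ico (M+1) (n+1), (μ:ℝ)⁻¹ * Pc b μ n) / b n with hydef
  set w := ∑ μ ∈ Icc 1 M, B^(μ-1) with hwdef
  have hy0 : 0 ≤ y := div_nonneg htail0 (le_of_lt hbpos)
  have e6 : x + y - (1-B)⁻¹ = (x - w) + (y - B^M/(1-B)) := by
    rw [← hheadval]; ring
  rw [e6]
  have habs : |(x - w) + (y - B^M/(1-B))| ≤ |x - w| + |y - B^M/(1-B)| := abs_add_le _ _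
  have habs2 : |y - B^M/(1-B)| ≤ C * (β^M * (1-β)⁻¹) + B^M/(1-B) := by
    rw [abs_le]
    constructor
    · nlinarith
    · nlinarith
  have hxw : |x - w| < ε/3 := hheadm
  calc |(x - w) + (y - B^M/(1-B))| ≤ |x - w| + |y - B^M/(1-B)| := habs
    _ < ε/3 + (C * (β^M * (1-β)⁻¹) + B^M/(1-B)) := by linarith
    _ < ε/3 + ε/2 := by
        apply add_lt_add_of_le_of_lt le_rfl
        have : C * (β^M * (1-β)⁻¹) + B^M/(1-B) < ε/2 := by
          have := hMsmall
          linarith [this]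
        exact this
    _ ≤ ε := by linarith

lemma blower (H : Hyp d b) {θ : ℝ} (hθ0 : 0 < θ) (hθ1 : θ < 1) :
    ∃ c : ℝ, 0 < c ∧ ∃ M₀, ∀ m, M₀ ≤ m → c * θ^(d*m) ≤ b (d*m) := by
  have hθd : (0:ℝ) < θ^d := pow_pos hθ0 d
  have hθd1 : θ^d < 1 := pow_lt_one₀ (le_of_lt hθ0) hθ1 (by have := H.hd; omega)
  have hinv : (1:ℝ) < (θ^d)⁻¹ := (one_lt_inv₀ hθd).mpr hθd1
  have hev := H.ratio.eventually_lt_const hinv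
  have hpos1 : ∀ᶠ m in atTop, 0 < b (d*(m+1)) :=
    (tendsto_add_atTop_nat 1).eventually H.posEv
  obtain ⟨M₀, hM₀⟩ := eventually_atTop.1 ((hev.and hpos1).and H.posEv)
  have hstep : ∀ m, M₀ ≤ m → θ^d * b (d*m) ≤ b (d*(m+1)) := by
    intro m hm
    obtain ⟨⟨h1, h2⟩, _⟩ := hM₀ m hm
    have h3 : b (d*m) < (θ^d)⁻¹ * b (d*(m+1)) := (div_lt_iff₀ h2).mp h1
    calc θ^d * b (d*m) ≤ θ^d * ((θ^d)⁻¹ * b (d*(m+1))) :=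
          mul_le_mul_of_nonneg_left (le_of_lt h3) (le_of_lt hθd)
      _ = b (d*(m+1)) := by
          rw [← mul_assoc, mul_inv_cancel₀ (ne_of_gt hθd), one_mul]
  have hind : ∀ t, b (d*M₀) * θ^(d*t) ≤ b (d*(M₀+t)) := by
    intro t
    induction t with
    | zero => simp
    | succ t ih =>
      have h4 := hstep (M₀+t) (by omega)
      calc b (d*M₀) * θ^(d*(t+1)) = θ^d * (b (d*M₀) * θ^(d*t)) := by
            rw [show d*(t+1) = d*t + d by ring, pow_add]
            ring
        _ ≤ θ^d * b (d*(M₀+t)) := mul_le_mul_of_nonneg_left ih (le_of_lt hθd)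
        _ ≤ b (d*(M₀+t+1)) := by
            have : M₀ + t + 1 = (M₀+t) + 1 := rfl
            rw [this]
            exact h4
  have hbM₀ : 0 < b (d*M₀) := (hM₀ M₀ le_rfl).2
  refine ⟨b (d*M₀) * (θ^(d*M₀))⁻¹, by positivity, M₀, ?_⟩
  intro m hm
  have key := hind (m - M₀)
  have e1 : M₀ + (m - M₀) = m := by omega
  rw [e1] at key
  have e2 : θ^(d*m) = θ^(d*M₀) * θ^(d*(m-M₀)) := by
    rw [← pow_add]
    congr 1
    have : d*(m-M₀) = d*m - d*M₀ := Nat.mul_sub d m M₀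
    have h5 : d*M₀ ≤ d*m := Nat.mul_le_mul_left d hm
    omega
  calc b (d*M₀) * (θ^(d*M₀))⁻¹ * θ^(d*m)
      = b (d*M₀) * θ^(d*(m-M₀)) := by
        rw [e2, ← mul_assoc]
        rw [mul_assoc (b (d*M₀)), inv_mul_cancel₀ (ne_of_gt (pow_pos hθ0 _)), mul_one]
    _ ≤ b (d*m) := key

end

section

lemma Pc_eq_zero_of_lt {a : ℕ → ℝ} (ha0 : a 0 = 0) :
    ∀ μ n : ℕ, n < μ → Pc a μ n = 0 := by
  intro μ
  induction μ with
  | zero => intro n hn; omega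
  | succ μ ih =>
    intro n hn
    rw [Pc_succ]
    apply Finset.sum_eq_zero
    intro i hi
    have hin : i ≤ n := by
      have := Finset.mem_range.mp hi
      omega
    rcases Nat.eq_zero_or_pos i with h0 | h0
    · rw [h0, ha0, zero_mul]
    · rw [ih (n - i) (by omega), mul_zero]

lemma Pc_rescale (a : ℕ → ℝ) (ρ : ℝ) (μ n : ℕ) :
    Pc (fun k => a k * ρ^k) μ n = ρ^n * Pc a μ n := by
  have hmk : PowerSeries.mk (fun k => a k * ρ^k) = PowerSeries.rescale ρ (PowerSeries.mk a) := by
    ext k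
    rw [PowerSeries.coeff_mk, PowerSeries.coeff_rescale, PowerSeries.coeff_mk, mul_comm]
  rw [Pc, hmk, ← map_pow, PowerSeries.coeff_rescale]
  rfl

lemma nq_lim {q : ℝ} (hq0 : 0 ≤ q) (hq1 : q < 1) :
    Tendsto (fun n : ℕ => (n:ℝ) * q^(n/2)) atTop (nhds 0) := by
  have hsupport : Tendsto (fun t : ℕ => (t:ℝ) * q^t) atTop (nhds 0) := by
    have hs : Summable (fun t : ℕ => ‖(t:ℝ)^1 * q^t‖) :=
      summable_norm_pow_mul_geometric_of_norm_lt_one 1 (by rwa [Real.norm_eq_abs, abs_of_nonneg hq0])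
    have := hs.of_norm.tendsto_atTop_zero
    simpa using this
  have hg : Tendsto (fun t : ℕ => (2*(t:ℝ)+1) * q^t) atTop (nhds 0) := by
    have h1 := (hsupport.const_mul 2).add (tendsto_pow_atTop_nhds_zero_of_lt_one hq0 hq1)
    rw [mul_zero, add_zero] at h1
    apply h1.congr
    intro t
    ring
  have hdiv : Tendsto (fun n : ℕ => n / 2) atTop atTop := by
    apply tendsto_atTop_atTop_of_monotone (fun x y h => Nat.div_le_div_right h)
    intro c
    exact ⟨2*c+1, by omega⟩
  have hcomp := hg.comp hdiv
  apply squeeze_zero (fun n => by positivity) _ hcomp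
  intro n
  simp only [Function.comp_apply]
  apply mul_le_mul_of_nonneg_right _ (pow_nonneg hq0 _)
  have h2 : (n:ℝ) ≤ 2*((n/2 : ℕ):ℝ)+1 := by
    have : n ≤ 2*(n/2)+1 := by omega
    exact_mod_cast this
  exact h2

lemma tsum_eval (a : ℕ → ℝ) (ha0 : a 0 = 0) {n : ℕ} (hn : 1 ≤ n) :
    (∑' q : ℕ × ℕ,
        ((Nat.totient (q.1 + 1) : ℝ) / (((q.1 : ℕ) + 1) * ((q.2 : ℕ) + 1))) *
          (if (q.1 + 1) ∣ n then
            PowerSeries.coeff (n / (q.1 + 1)) ((PowerSeries.mk a) ^ (q.2 + 1))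
          else 0))
      = (∑ μ ∈ Icc 1 n, ((μ:ℝ))⁻¹ * Pc a μ n)
        + ∑ i ∈ range (n-1),
            (if ((i+1)+1) ∣ n then
              ((Nat.totient ((i+1)+1) : ℝ) / (((i+1:ℕ):ℝ)+1))
                * ∑ μ ∈ Icc 1 (n/((i+1)+1)), ((μ:ℝ))⁻¹ * Pc a μ (n/((i+1)+1))
            else 0) := by
  classical
  rw [tsum_eq_sum (s := (range n) ×ˢ (range n)) ?vanish]
  case vanish =>
    intro q hq
    rw [Finset.mem_product] at hq
    push_neg at hq
    by_cases h1 : q.1 ∈ range n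
    · have h2 : n ≤ q.2 := by
        have := hq h1
        simpa using this
      by_cases hdvd : (q.1+1) ∣ n
      · rw [if_pos hdvd]
        have hlt : n / (q.1+1) < q.2 + 1 := by
          have := Nat.div_le_self n (q.1+1)
          omega
        rw [show PowerSeries.coeff (n/(q.1+1)) ((PowerSeries.mk a)^(q.2+1))
            = Pc a (q.2+1) (n/(q.1+1)) from rfl]
        rw [Pc_eq_zero_of_lt ha0 _ _ hlt, mul_zero]
      · rw [if_neg hdvd, mul_zero]
    · have h1' : n ≤ q.1 := by simpa using h1
      have hdvd : ¬ (q.1+1) ∣ n := by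
        intro hd
        have := Nat.le_of_dvd (by omega) hd
        omega
      rw [if_neg hdvd, mul_zero]
  rw [Finset.sum_product]
  have hinner : ∀ k' ∈ range n,
      (∑ y ∈ range n, ((Nat.totient (k'+1) : ℝ) / (((k' : ℕ) + 1) * ((y : ℕ) + 1))) *
        (if (k'+1) ∣ n then
          PowerSeries.coeff (n/(k'+1)) ((PowerSeries.mk a)^(y+1)) else 0))
      = (if (k'+1) ∣ n then
          ((Nat.totient (k'+1) : ℝ) / (((k':ℕ):ℝ)+1))
            * ∑ μ ∈ Icc 1 (n/(k'+1)), ((μ:ℝ))⁻¹ * Pc a μ (n/(k'+1))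
        else 0) := by
    intro k' _
    by_cases hdvd : (k'+1) ∣ n
    · simp only [if_pos hdvd]
      set j := n/(k'+1) with hj
      have hjn : j ≤ n := Nat.div_le_self n _
      rw [← Finset.sum_subset (Finset.range_subset_range.mpr hjn) ?hz]
      case hz =>
        intro y _ hyj
        have hlt2 : j < y + 1 := by
          simp only [Finset.mem_range, not_lt] at hyj
          omega
        rw [show PowerSeries.coeff j ((PowerSeries.mk a)^(y+1)) = Pc a (y+1) j from rfl,
          Pc_eq_zero_of_lt ha0 _ _ hlt2, mul_zero]
      rw [show Icc 1 j = Ico 1 (j+1) from (Finset.Ico_add_one_right_eq_Icc 1 j).symm,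
        Finset.sum_Ico_eq_sum_range]
      rw [Finset.mul_sum]
      simp only [Nat.add_sub_cancel]
      apply Finset.sum_congr rfl
      intro y _
      rw [show 1 + y = y + 1 by omega]
      rw [show PowerSeries.coeff j ((PowerSeries.mk a)^(y+1)) = Pc a (y+1) j from rfl]
      rw [div_eq_mul_inv, mul_inv]
      push_cast
      ring
    · simp only [if_neg hdvd, mul_zero]
      exact Finset.sum_const_zero
  rw [Finset.sum_congr rfl hinner]
  obtain ⟨n', rfl⟩ : ∃ n', n = n' + 1 := ⟨n - 1, by omega⟩
  rw [Finset.sum_range_succ']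
  simp only [Nat.add_sub_cancel]
  rw [add_comm]
  congr 1
  simp [Nat.totient_one, Nat.div_one]

end

end CycleAux

/-- Cyclic arrangements: let `(g_k)_{k ≥ 1}` be non-negative integers, supported on multiples
of `d`, with generating series `g ∈ 𝒮_d`, radius of convergence `ρ ∈ (0,1)` and `g(ρ) < 1`.
The cycle generating series `C(z) = ∑_{k ≥ 1} (φ(k)/k) log(1/(1 - g(z^k)))` has `n`-th
coefficient `∑_{k,m ≥ 1} (φ(k)/(km)) [z^{n/k}] g(z)^m` (the term appearing only when `k ∣ n`);
these satisfy `[z^n] C(z) ∼ (1 - g(ρ))⁻¹ [z^n] g(z)` along multiples of `d`. -/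
theorem cycle_series_coeff_asymptotics (d : ℕ) (g : ℕ → ℕ) (ρ : ℝ)
    (hg0 : g 0 = 0) (hρ1 : ρ < 1)
    (hsub : SubexpClass d (fun k => (g k : ℝ)) ρ)
    (hgρ : (∑' k, (g k : ℝ) * ρ ^ k) < 1) :
    Filter.Tendsto
      (fun m =>
        (∑' q : ℕ × ℕ,
            ((Nat.totient (q.1 + 1) : ℝ) / (((q.1 : ℕ) + 1) * ((q.2 : ℕ) + 1))) *
              (if (q.1 + 1) ∣ (d * m) then
                PowerSeries.coeff ((d * m) / (q.1 + 1))
                  ((PowerSeries.mk (fun k => (g k : ℝ))) ^ (q.2 + 1))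
              else 0))
          / (g (d * m) : ℝ))
      Filter.atTop
      (nhds ((1 - ∑' k, (g k : ℝ) * ρ ^ k)⁻¹)) := by
  classical
  obtain ⟨hd, hρ0, hge0, hasupp, hapos, hasum, hrad, harat, haconv⟩ := hsub
  set a : ℕ → ℝ := fun k => (g k : ℝ) with hadef
  set b : ℕ → ℝ := fun k => (g k : ℝ) * ρ ^ k with hbdef
  have hρn : ∀ n : ℕ, (ρ:ℝ)^n ≠ 0 := fun n => ne_of_gt (pow_pos hρ0 n)
  have ha0 : a 0 = 0 := by simp [hadef, hg0]
  -- build the hypothesis package for `b`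
  have H : CycleAux.Hyp d b := by
    constructor
    · exact hd
    · intro n
      exact mul_nonneg (Nat.cast_nonneg _) (le_of_lt (pow_pos hρ0 n))
    · intro n hn
      have : (g n : ℝ) = 0 := hasupp n hn
      show (g n : ℝ) * ρ ^ n = 0
      rw [this, zero_mul]
    · exact hasum
    · exact hgρ
    · obtain ⟨N, hN⟩ := hapos
      exact ⟨N, fun n hn hdn => mul_pos (hN n hn hdn) (pow_pos hρ0 n)⟩
    · have h1 := harat.mul_const ((ρ^d)⁻¹)
      rw [mul_inv_cancel₀ (hρn d)] at h1
      refine h1.congr fun m => ?_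
      show (g (d*m) : ℝ)/(g (d*m+d) : ℝ) * (ρ^d)⁻¹
          = ((g (d*m):ℝ) * ρ^(d*m))/((g (d*(m+1)):ℝ) * ρ^(d*(m+1)))
      rw [Nat.mul_succ, ← div_mul_div_comm]
      congr 1
      rw [pow_add, div_mul_eq_div_div, div_self (hρn (d*m)), one_div]
    · refine haconv.congr fun m => ?_
      have e : (∑ i ∈ Finset.range (d*m+1), b i * b (d*m - i))
          = ρ^(d*m) * ∑ i ∈ Finset.range (d*m+1), (g i : ℝ) * (g (d*m - i) : ℝ) := by
        rw [Finset.mul_sum]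
        apply Finset.sum_congr rfl
        intro i hi
        have hin : i ≤ d*m := by
          have := Finset.mem_range.mp hi
          omega
        show (g i:ℝ) * ρ^i * ((g (d*m-i):ℝ) * ρ^(d*m-i)) = ρ^(d*m) * ((g i:ℝ) * (g (d*m-i):ℝ))
        calc (g i:ℝ) * ρ^i * ((g (d*m-i):ℝ) * ρ^(d*m-i))
            = ((g i:ℝ) * (g (d*m-i):ℝ)) * (ρ^i * ρ^(d*m-i)) := by ring
          _ = ((g i:ℝ) * (g (d*m-i):ℝ)) * ρ^(d*m) := by
              rw [← pow_add]
              congr 2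
              omega
          _ = ρ^(d*m) * ((g i:ℝ) * (g (d*m-i):ℝ)) := by ring
      show (∑ i ∈ Finset.range (d*m+1), (g i:ℝ) * (g (d*m - i):ℝ)) / (g (d*m):ℝ)
          = (∑ i ∈ Finset.range (d*m+1), b i * b (d*m - i)) / b (d*m)
      rw [e, show b (d*m) = ρ^(d*m) * (g (d*m):ℝ) from mul_comm _ _,
        mul_div_mul_left _ _ (hρn (d*m))]
  -- notation
  have hB0 : 0 ≤ ∑' n, b n := tsum_nonneg H.nonneg
  have hB1 : (∑' n, b n) < 1 := H.lt_one
  set Λ : ℝ := (1 - ∑' n, b n)⁻¹ with hΛdef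
  have hΛ0 : 0 ≤ Λ := by
    rw [hΛdef]
    apply inv_nonneg.mpr
    linarith
  -- the main (k = 1) part
  have hLb := CycleAux.Lb_ratio H
  -- remainder part
  set θ : ℝ := Real.sqrt ((ρ+1)/2) with hθdef
  have hθsq : θ^2 = (ρ+1)/2 := Real.sq_sqrt (by linarith)
  have hθ0 : 0 < θ := Real.sqrt_pos.mpr (by linarith)
  have hθ1 : θ < 1 := by
    nlinarith [hθsq, hθ0]
  have hρθ : ρ < θ^2 := by rw [hθsq]; linarith
  obtain ⟨c, hc0, M₀, hM₀⟩ := CycleAux.blower H hθ0 hθ1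
  set q : ℝ := ρ/θ^2 with hqdef
  have hq0 : 0 ≤ q := by positivity
  have hq1 : q < 1 := by
    rw [hqdef, div_lt_one (by positivity)]
    exact hρθ
  set R : ℕ → ℝ := fun n => ∑ i ∈ Finset.range (n-1),
      (if ((i+1)+1) ∣ n then
        ((Nat.totient ((i+1)+1) : ℝ) / (((i+1:ℕ):ℝ)+1))
          * ∑ μ ∈ Finset.Icc 1 (n/((i+1)+1)), ((μ:ℝ))⁻¹ * CycleAux.Pc a μ (n/((i+1)+1))
      else 0) with hRdef
  have hPa0 : ∀ μ, 1 ≤ μ → ∀ j, 0 ≤ CycleAux.Pc a μ j := by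
    intro μ hμ j
    apply CycleAux.Pc_nonneg _ μ hμ
    intro k
    exact Nat.cast_nonneg _
  have hLa_nonneg : ∀ j : ℕ, 0 ≤ ∑ μ ∈ Finset.Icc 1 j, ((μ:ℝ))⁻¹ * CycleAux.Pc a μ j := by
    intro j
    apply Finset.sum_nonneg
    intro μ hμ
    have hμ1 : 1 ≤ μ := (Finset.mem_Icc.mp hμ).1
    exact mul_nonneg (by positivity) (hPa0 μ hμ1 j)
  have hR0 : ∀ n, 0 ≤ R n := by
    intro n
    apply Finset.sum_nonneg
    intro i _
    by_cases hdvd : ((i+1)+1) ∣ n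
    · rw [if_pos hdvd]
      apply mul_nonneg _ (hLa_nonneg _)
      positivity
    · rw [if_neg hdvd]
  -- pointwise bound on the partial log sums
  have hLa_le : ∀ j : ℕ, (∑ μ ∈ Finset.Icc 1 j, ((μ:ℝ))⁻¹ * CycleAux.Pc a μ j)
      ≤ Λ * (ρ⁻¹)^j := by
    intro j
    have e2 : (∑ μ ∈ Finset.Icc 1 j, ((μ:ℝ))⁻¹ * CycleAux.Pc a μ j)
        = (ρ⁻¹)^j * ∑ μ ∈ Finset.Icc 1 j, ((μ:ℝ))⁻¹ * CycleAux.Pc b μ j := by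
      rw [Finset.mul_sum]
      apply Finset.sum_congr rfl
      intro μ _
      have e3 : CycleAux.Pc b μ j = ρ^j * CycleAux.Pc a μ j := CycleAux.Pc_rescale a ρ μ j
      rw [e3, inv_pow]
      field_simp
    rw [e2]
    have hLbj : (∑ μ ∈ Finset.Icc 1 j, ((μ:ℝ))⁻¹ * CycleAux.Pc b μ j) ≤ Λ := by
      calc (∑ μ ∈ Finset.Icc 1 j, ((μ:ℝ))⁻¹ * CycleAux.Pc b μ j)
          ≤ ∑ μ ∈ Finset.Icc 1 j, (∑' n, b n)^μ := by
            apply Finset.sum_le_sum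
            intro μ hμ
            have hμ1 : 1 ≤ μ := (Finset.mem_Icc.mp hμ).1
            have hPb0 : 0 ≤ CycleAux.Pc b μ j := CycleAux.Pc_nonneg H.nonneg μ hμ1 j
            have hinv1 : ((μ:ℝ))⁻¹ ≤ 1 := by
              apply inv_le_one_of_one_le₀
              exact_mod_cast hμ1
            calc ((μ:ℝ))⁻¹ * CycleAux.Pc b μ j ≤ 1 * CycleAux.Pc b μ j :=
                  mul_le_mul_of_nonneg_right hinv1 hPb0
              _ = CycleAux.Pc b μ j := one_mul _
              _ ≤ (∑' n, b n)^μ := CycleAux.Pc_le H.nonneg H.hsum μ hμ1 j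
        _ ≤ ∑' μ : ℕ, (∑' n, b n)^μ := by
            apply Summable.sum_le_tsum
            · intro μ _
              exact pow_nonneg hB0 μ
            · exact summable_geometric_of_lt_one hB0 hB1
        _ = Λ := tsum_geometric_of_lt_one hB0 hB1
    calc (ρ⁻¹)^j * ∑ μ ∈ Finset.Icc 1 j, ((μ:ℝ))⁻¹ * CycleAux.Pc b μ j
        ≤ (ρ⁻¹)^j * Λ := by
          apply mul_le_mul_of_nonneg_left hLbj
          positivity
      _ = Λ * (ρ⁻¹)^j := mul_comm _ _
  have hρinv1 : (1:ℝ) ≤ ρ⁻¹ := by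
    rw [le_inv_comm₀ one_pos hρ0]
    simpa using le_of_lt hρ1
  have hRle : ∀ n : ℕ, R n ≤ (n:ℝ) * (Λ * (ρ⁻¹)^(n/2)) := by
    intro n
    have hbnd : ∀ i ∈ Finset.range (n-1),
        (if ((i+1)+1) ∣ n then
          ((Nat.totient ((i+1)+1) : ℝ) / (((i+1:ℕ):ℝ)+1))
            * ∑ μ ∈ Finset.Icc 1 (n/((i+1)+1)), ((μ:ℝ))⁻¹ * CycleAux.Pc a μ (n/((i+1)+1))
        else 0) ≤ Λ * (ρ⁻¹)^(n/2) := by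
      intro i _
      by_cases hdvd : ((i+1)+1) ∣ n
      · rw [if_pos hdvd]
        set k := (i+1)+1 with hk
        set j := n / k with hjdef
        have hcoef : ((Nat.totient k : ℝ) / (((i+1:ℕ):ℝ)+1)) ≤ 1 := by
          rw [div_le_one (by positivity)]
          have := Nat.totient_le k
          have ek : ((k:ℕ):ℝ) = ((i+1:ℕ):ℝ)+1 := by rw [hk]; push_cast; ring
          calc (Nat.totient k : ℝ) ≤ (k:ℝ) := by exact_mod_cast this
            _ = ((i+1:ℕ):ℝ)+1 := ek
        have hLaj : (∑ μ ∈ Finset.Icc 1 j, ((μ:ℝ))⁻¹ * CycleAux.Pc a μ j) ≤ Λ * (ρ⁻¹)^(n/2) := by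
          calc (∑ μ ∈ Finset.Icc 1 j, ((μ:ℝ))⁻¹ * CycleAux.Pc a μ j)
              ≤ Λ * (ρ⁻¹)^j := hLa_le j
            _ ≤ Λ * (ρ⁻¹)^(n/2) := by
                apply mul_le_mul_of_nonneg_left _ hΛ0
                apply pow_le_pow_right₀ hρinv1
                rw [hjdef]
                exact Nat.div_le_div_left (by omega) (by omega)
        calc ((Nat.totient k : ℝ) / (((i+1:ℕ):ℝ)+1))
              * ∑ μ ∈ Finset.Icc 1 j, ((μ:ℝ))⁻¹ * CycleAux.Pc a μ j
            ≤ 1 * (Λ * (ρ⁻¹)^(n/2)) := by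
              apply mul_le_mul hcoef hLaj (hLa_nonneg j) zero_le_one
          _ = Λ * (ρ⁻¹)^(n/2) := one_mul _
      · rw [if_neg hdvd]
        positivity
    calc R n ≤ ∑ _i ∈ Finset.range (n-1), Λ * (ρ⁻¹)^(n/2) := Finset.sum_le_sum hbnd
      _ = ((n-1:ℕ):ℝ) * (Λ * (ρ⁻¹)^(n/2)) := by
          rw [Finset.sum_const, Finset.card_range, nsmul_eq_mul]
      _ ≤ (n:ℝ) * (Λ * (ρ⁻¹)^(n/2)) := by
          apply mul_le_mul_of_nonneg_right _ (by positivity)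
          exact_mod_cast Nat.sub_le n 1
  -- remainder tends to zero
  have hRtend : Filter.Tendsto (fun m => R (d*m) / (g (d*m) : ℝ)) Filter.atTop (nhds 0) := by
    set D : ℝ := Λ/(c*θ) with hDdef
    have hD0 : 0 ≤ D := by positivity
    have hdmT : Filter.Tendsto (fun m : ℕ => d*m) Filter.atTop Filter.atTop := by
      apply Filter.tendsto_atTop_mono (fun m => Nat.le_mul_of_pos_left m (by omega))
      exact Filter.tendsto_id
    have hg0' := ((CycleAux.nq_lim hq0 hq1).comp hdmT).const_mul D
    rw [mul_zero] at hg0'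
    apply squeeze_zero' (g := fun m => D * (((d*m:ℕ):ℝ) * q^((d*m)/2)))
    · exact Filter.Eventually.of_forall fun m => div_nonneg (hR0 _) (Nat.cast_nonneg _)
    · filter_upwards [Filter.eventually_ge_atTop M₀] with m hm
      set n := d*m with hn
      have hbc : c * θ^n ≤ b n := hM₀ m hm
      have e1 : R n / (g n : ℝ) = (ρ^n * R n) / b n := by
        rw [show b n = ρ^n * (g n : ℝ) from mul_comm _ _,
          mul_div_mul_left _ _ (hρn n)]
      rw [e1]
      set p := n/2 with hp
      have hstep1 : (ρ^n * R n) / b n ≤ (ρ^n * ((n:ℝ) * (Λ * (ρ⁻¹)^p))) / (c * θ^n) := by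
        apply div_le_div₀ (by positivity)
        · exact mul_le_mul_of_nonneg_left (hRle n) (by positivity)
        · positivity
        · exact hbc
      have e4 : ρ^n * ((n:ℝ) * (Λ * (ρ⁻¹)^p)) = (n:ℝ) * Λ * ρ^(n-p) := by
        have : ρ^n = ρ^(n-p) * ρ^p := by
          rw [← pow_add]
          congr 1
          omega
        rw [this, inv_pow]
        have hρp : (ρ:ℝ)^p ≠ 0 := hρn p
        field_simp
      have hstep2 : (ρ^n * ((n:ℝ) * (Λ * (ρ⁻¹)^p))) / (c * θ^n)
          ≤ ((n:ℝ) * Λ * ρ^p) / (c * (θ^(2*p) * θ)) := by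
        rw [e4]
        apply div_le_div₀ (by positivity)
        · apply mul_le_mul_of_nonneg_left _ (by positivity)
          apply pow_le_pow_of_le_one (le_of_lt hρ0) (le_of_lt hρ1)
          omega
        · positivity
        · apply mul_le_mul_of_nonneg_left _ (le_of_lt hc0)
          rw [← pow_succ]
          apply pow_le_pow_of_le_one (le_of_lt hθ0) (le_of_lt hθ1)
          omega
      have e5 : ((n:ℝ) * Λ * ρ^p) / (c * (θ^(2*p) * θ)) = D * ((n:ℝ) * q^p) := by
        rw [hDdef, hqdef, div_pow, pow_mul]
        have h1 : ((θ:ℝ)^2)^p ≠ 0 := by positivity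
        field_simp
      calc (ρ^n * R n) / b n ≤ (ρ^n * ((n:ℝ) * (Λ * (ρ⁻¹)^p))) / (c * θ^n) := hstep1
        _ ≤ ((n:ℝ) * Λ * ρ^p) / (c * (θ^(2*p) * θ)) := hstep2
        _ = D * ((n:ℝ) * q^p) := e5
    · exact hg0'
  -- assemble
  have hmain := hLb.add hRtend
  rw [add_zero] at hmain
  apply Filter.Tendsto.congr' _ hmain
  filter_upwards [Filter.eventually_ge_atTop 1] with m hm
  have hn1 : 1 ≤ d*m := by
    have : 1*1 ≤ d*m := Nat.mul_le_mul hd hm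
    omega
  rw [CycleAux.tsum_eval a ha0 hn1]
  rw [add_div]
  congr 1
  have e2 : (∑ μ ∈ Finset.Icc 1 (d*m), ((μ:ℝ))⁻¹ * CycleAux.Pc b μ (d*m))
      = ρ^(d*m) * ∑ μ ∈ Finset.Icc 1 (d*m), ((μ:ℝ))⁻¹ * CycleAux.Pc a μ (d*m) := by
    rw [Finset.mul_sum]
    apply Finset.sum_congr rfl
    intro μ _
    rw [CycleAux.Pc_rescale a ρ μ (d*m)]
    ring
  rw [e2, show b (d*m) = ρ^(d*m) * (g (d*m):ℝ) from mul_comm _ _,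
    mul_div_mul_left _ _ (hρn (d*m))]
end
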